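/- arXiv:2406.01531 — 7 statements merged into one kernel-verified Lean document; each statement's English description precedes it below -/
import Mathlib

section
/- Every isotropy subgroup of the SE(3)-action on the two-body phase space M is of one of four types: for every (q,p) ∈ M, the isotropy subgroup SE(3)_{(q,p)} equals G¹(x) for some x ∈ ℝ³, or G²(y) for some y ∈ ℝ³ with y ≠ 0, or G³(x,y) for some x,y ∈ ℝ³ with x×y ≠ 0, or the trivial group G⁴ = {(I,0)}. -/
open Matrix

/-- Vectors in ℝ³. -/
abbrev V3 : Type := Fin 3 → ℝ

/-- The two-body phase space M = ℝ³ × ℝ³ × ℝ³ × ℝ³, points (q¹, q², p¹, p²). -/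
abbrev M2B : Type := V3 × V3 × V3 × V3

/-- A 3×3 real matrix is special orthogonal. -/
def SO3 (A : Matrix (Fin 3) (Fin 3) ℝ) : Prop := Aᵀ * A = 1 ∧ A.det = 1

/-- The action of (A, a) ∈ SE(3) on the phase space:
(A,a)·(q¹,q²,p¹,p²) = (Aq¹+a, Aq²+a, Ap¹, Ap²). -/
def act (A : Matrix (Fin 3) (Fin 3) ℝ) (a : V3) (m : M2B) : M2B :=
  (A *ᵥ m.1 + a, A *ᵥ m.2.1 + a, A *ᵥ m.2.2.1, A *ᵥ m.2.2.2)

/-- The isotropy subgroup SE(3)_{(q,p)} of a point of M, as a set of pairs (A,a)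
with A special orthogonal. -/
def isotropy (m : M2B) : Set (Matrix (Fin 3) (Fin 3) ℝ × V3) :=
  {g | SO3 g.1 ∧ act g.1 g.2 m = m}

/-- The momentum map J(q¹,q²,p¹,p²) = (q¹×p¹ + q²×p², p¹+p²). -/
def Jmom (m : M2B) : V3 × V3 :=
  (m.1 ⨯₃ m.2.2.1 + m.2.1 ⨯₃ m.2.2.2, m.2.2.1 + m.2.2.2)

/-- G¹(x) = {(A,a) ∈ SE(3) : a = x − Ax}. -/
def G1 (x : V3) : Set (Matrix (Fin 3) (Fin 3) ℝ × V3) :=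
  {g | SO3 g.1 ∧ g.2 = x - g.1 *ᵥ x}

/-- G²(y) = {(A,0) ∈ SE(3) : Ay = y}. -/
def G2 (y : V3) : Set (Matrix (Fin 3) (Fin 3) ℝ × V3) :=
  {g | SO3 g.1 ∧ g.1 *ᵥ y = y ∧ g.2 = 0}

/-- G³(x,y) = {(A,a) ∈ SE(3) : Ay = y and a = x − Ax}. -/
def G3 (x y : V3) : Set (Matrix (Fin 3) (Fin 3) ℝ × V3) :=
  {g | SO3 g.1 ∧ g.1 *ᵥ y = y ∧ g.2 = x - g.1 *ᵥ x}

/-- G⁴ = {(I, 0)}, the trivial subgroup. -/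
def G4 : Set (Matrix (Fin 3) (Fin 3) ℝ × V3) := {((1 : Matrix (Fin 3) (Fin 3) ℝ), (0 : V3))}

/-! ### Auxiliary lemmas -/

/-- Special orthogonal matrices preserve the dot product. -/
lemma so3_dot {A : Matrix (Fin 3) (Fin 3) ℝ} (hA : SO3 A) (x y : V3) :
    (A *ᵥ x) ⬝ᵥ (A *ᵥ y) = x ⬝ᵥ y := by
  calc (A *ᵥ x) ⬝ᵥ (A *ᵥ y) = (x ᵥ* Aᵀ) ⬝ᵥ (A *ᵥ y) := by rw [Matrix.vecMul_transpose]
    _ = x ⬝ᵥ (Aᵀ *ᵥ (A *ᵥ y)) := (dotProduct_mulVec _ _ _).symm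
    _ = x ⬝ᵥ ((Aᵀ * A) *ᵥ y) := by rw [Matrix.mulVec_mulVec]
    _ = x ⬝ᵥ y := by rw [hA.1, Matrix.one_mulVec]

/-- Two vectors with vanishing cross product are parallel (if the second is nonzero). -/
lemma parallel_of_cross_eq_zero {u y : V3} (h : u ⨯₃ y = 0) (hy : y ≠ 0) :
    ∃ c : ℝ, u = c • y := by
  have e0 := congrFun h 0
  have e1 := congrFun h 1
  have e2 := congrFun h 2
  simp [cross_apply] at e0 e1 e2
  obtain ⟨k, hk⟩ := Function.ne_iff.mp hy
  refine ⟨u k / y k, funext fun i => ?_⟩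
  simp only [Pi.smul_apply, smul_eq_mul]
  fin_cases i <;> fin_cases k <;> simp at hk ⊢ <;> field_simp <;>
    linarith [e0, e1, e2]

/-- The double cross product expansion. -/
lemma cross_cross3 (z u v : V3) : z ⨯₃ (u ⨯₃ v) = (z ⬝ᵥ v) • u - (z ⬝ᵥ u) • v := by
  funext i
  fin_cases i <;> simp [cross_apply, dotProduct, Fin.sum_univ_three] <;> ring

lemma mul_transpose_rows (A : Matrix (Fin 3) (Fin 3) ℝ) (u v w : V3) :
    (Matrix.of ![u, v, w]) * Aᵀ = Matrix.of ![A *ᵥ u, A *ᵥ v, A *ᵥ w] := by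
  ext i j
  fin_cases i <;> simp [Matrix.mul_apply, Matrix.mulVec, dotProduct, mul_comm]

lemma mul_transpose_cols (A : Matrix (Fin 3) (Fin 3) ℝ) (u v w : V3) :
    A * (Matrix.of ![u, v, w])ᵀ = (Matrix.of ![A *ᵥ u, A *ᵥ v, A *ᵥ w])ᵀ := by
  ext i j
  fin_cases j <;>
    simp [Matrix.mul_apply, Matrix.mulVec, dotProduct, Matrix.vecHead, Matrix.vecTail]

lemma det_of_rows (u v w : V3) : (Matrix.of ![u, v, w]).det = u ⬝ᵥ (v ⨯₃ w) :=
  (triple_product_eq_det u v w).symm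

/-- A special orthogonal matrix fixing two non-parallel vectors is the identity. -/
lemma eq_one_of_fix_two {A : Matrix (Fin 3) (Fin 3) ℝ} (hA : SO3 A) {u v : V3}
    (hu : A *ᵥ u = u) (hv : A *ᵥ v = v) (huv : u ⨯₃ v ≠ 0) : A = 1 := by
  set w : V3 := u ⨯₃ v with hw
  have hwu : w ⬝ᵥ u = 0 := by rw [dotProduct_comm]; exact dot_self_cross u v
  have hwv : w ⬝ᵥ v = 0 := by rw [dotProduct_comm]; exact dot_cross_self u v
  have hzu : (A *ᵥ w) ⬝ᵥ u = 0 := by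
    conv_lhs => rw [← hu]
    rw [so3_dot hA, hwu]
  have hzv : (A *ᵥ w) ⬝ᵥ v = 0 := by
    conv_lhs => rw [← hv]
    rw [so3_dot hA, hwv]
  have hcross : (A *ᵥ w) ⨯₃ w = 0 := by
    rw [hw, cross_cross3, hzu, hzv, zero_smul, zero_smul, sub_zero]
  obtain ⟨c, hc⟩ := parallel_of_cross_eq_zero hcross huv
  have hww : w ⬝ᵥ w ≠ 0 := fun h => huv ((dotProduct_self_eq_zero).mp h)
  -- c² = 1
  have hc2 : c * c = 1 := by
    have hpres := so3_dot hA w w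
    rw [hc] at hpres
    have h2 : (c * c) * (w ⬝ᵥ w) = w ⬝ᵥ w := by
      simpa [smul_dotProduct, dotProduct_smul, mul_assoc] using hpres
    have h3 : (c * c - 1) * (w ⬝ᵥ w) = 0 := by linear_combination h2
    rcases mul_eq_zero.mp h3 with h4 | h4
    · linarith
    · exact absurd h4 hww
  -- determinant of the frame
  have hdetB : (Matrix.of ![u, v, w]).det = w ⬝ᵥ w := by
    rw [det_of_rows, triple_product_permutation, triple_product_permutation, ← hw]
  have hdetB' : (Matrix.of ![u, v, w]).det ≠ 0 := by rw [hdetB]; exact hww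
  -- c = 1 via determinants
  have hcdet : (Matrix.of ![u, v, w]).det = c * (Matrix.of ![u, v, w]).det := by
    have h1 : ((Matrix.of ![u, v, w]) * Aᵀ).det = (Matrix.of ![u, v, w]).det := by
      rw [Matrix.det_mul, Matrix.det_transpose, hA.2, mul_one]
    have h2 : (Matrix.of ![u, v, w]) * Aᵀ = Matrix.of ![u, v, c • w] := by
      rw [mul_transpose_rows, hu, hv, hc]
    rw [h2] at h1
    have h5 : (Matrix.of ![u, v, c • w]).det = c * (Matrix.of ![u, v, w]).det := by
      rw [det_of_rows, det_of_rows, LinearMap.map_smul, dotProduct_smul, smul_eq_mul]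
    rw [h5] at h1
    exact h1.symm
  have hc1 : c = 1 := by
    have h6 : (c - 1) * (Matrix.of ![u, v, w]).det = 0 := by linear_combination -hcdet
    rcases mul_eq_zero.mp h6 with h7 | h7
    · linarith
    · exact absurd h7 hdetB'
  have hwfix : A *ᵥ w = w := by rw [hc, hc1, one_smul]
  -- A fixes the invertible frame, hence A = 1
  have hframe : A * (Matrix.of ![u, v, w])ᵀ = (Matrix.of ![u, v, w])ᵀ := by
    rw [mul_transpose_cols, hu, hv, hwfix]
  have hunit : IsUnit ((Matrix.of ![u, v, w])ᵀ).det := by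
    rw [Matrix.det_transpose]
    exact isUnit_iff_ne_zero.mpr hdetB'
  calc A = A * ((Matrix.of ![u, v, w])ᵀ * ((Matrix.of ![u, v, w])ᵀ)⁻¹) := by
          rw [Matrix.mul_nonsing_inv _ hunit, mul_one]
    _ = (A * (Matrix.of ![u, v, w])ᵀ) * ((Matrix.of ![u, v, w])ᵀ)⁻¹ := by rw [mul_assoc]
    _ = (Matrix.of ![u, v, w])ᵀ * ((Matrix.of ![u, v, w])ᵀ)⁻¹ := by rw [hframe]
    _ = 1 := Matrix.mul_nonsing_inv _ hunit

/-- Membership in the isotropy group, unfolded. -/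
lemma mem_isotropy_iff (q1 q2 p1 p2 : V3) (A : Matrix (Fin 3) (Fin 3) ℝ) (a : V3) :
    (A, a) ∈ isotropy (q1, q2, p1, p2) ↔
      SO3 A ∧ A *ᵥ p1 = p1 ∧ A *ᵥ p2 = p2 ∧ A *ᵥ (q2 - q1) = q2 - q1 ∧
        a = q1 - A *ᵥ q1 := by
  simp only [isotropy, act, Set.mem_setOf_eq, Prod.mk.injEq]
  constructor
  · rintro ⟨hA, h1, h2, h3, h4⟩
    have k1 : A *ᵥ q1 = q1 - a := by rw [eq_sub_iff_add_eq]; exact h1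
    have k2 : A *ᵥ q2 = q2 - a := by rw [eq_sub_iff_add_eq]; exact h2
    refine ⟨hA, h3, h4, ?_, ?_⟩
    · rw [Matrix.mulVec_sub, k1, k2]; abel
    · rw [k1]; abel
  · rintro ⟨hA, h3, h4, hdd, ha⟩
    have hd' : A *ᵥ q2 - A *ᵥ q1 = q2 - q1 := by rw [← Matrix.mulVec_sub]; exact hdd
    have h5 : A *ᵥ q2 = q2 - q1 + A *ᵥ q1 := by rw [← hd']; abel
    refine ⟨hA, by rw [ha]; abel, by rw [h5, ha]; abel, h3, h4⟩

lemma one_mem_isotropy (m : M2B) : ((1 : Matrix (Fin 3) (Fin 3) ℝ), (0 : V3)) ∈ isotropy m := by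
  refine ⟨⟨by simp, by simp⟩, ?_⟩
  simp [act]

/-- Every isotropy subgroup of the SE(3)-action on the two-body phase space
is of one of the four types G¹, G², G³, G⁴. -/
theorem stmt0 (m : M2B) :
    (∃ x : V3, isotropy m = G1 x) ∨
    (∃ y : V3, y ≠ 0 ∧ isotropy m = G2 y) ∨
    (∃ x y : V3, x ⨯₃ y ≠ 0 ∧ isotropy m = G3 x y) ∨
    isotropy m = G4 := by
  obtain ⟨q1, q2, p1, p2⟩ := m
  set d : V3 := q2 - q1 with hd
  -- helper: any pair of fixed vectors with nonzero cross forces G4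
  have G4case : ∀ u v : V3,
      (∀ A : Matrix (Fin 3) (Fin 3) ℝ, ∀ a : V3, (A, a) ∈ isotropy (q1, q2, p1, p2) →
        A *ᵥ u = u ∧ A *ᵥ v = v) → u ⨯₃ v ≠ 0 →
      isotropy (q1, q2, p1, p2) = G4 := by
    intro u v hfix huv
    ext ⟨A, a⟩
    simp only [G4, Set.mem_singleton_iff, Prod.mk.injEq]
    constructor
    · intro hmem
      obtain ⟨hfu, hfv⟩ := hfix A a hmem
      have hA1 : A = 1 := eq_one_of_fix_two ((mem_isotropy_iff _ _ _ _ _ _).mp hmem).1 hfu hfv huv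
      have ha := ((mem_isotropy_iff _ _ _ _ _ _).mp hmem).2.2.2.2
      rw [hA1, Matrix.one_mulVec, sub_self] at ha
      exact ⟨hA1, ha⟩
    · rintro ⟨rfl, rfl⟩
      exact one_mem_isotropy _
  -- helper: all fixed vectors on a line spanned by y
  have Lcase : ∀ y : V3, y ≠ 0 → (∃ c : ℝ, p1 = c • y) → (∃ c : ℝ, p2 = c • y) →
      (∃ c : ℝ, d = c • y) →
      (∀ A : Matrix (Fin 3) (Fin 3) ℝ, ∀ a : V3, (A, a) ∈ isotropy (q1, q2, p1, p2) →
        A *ᵥ y = y) →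
      (∃ y : V3, y ≠ 0 ∧ isotropy (q1, q2, p1, p2) = G2 y) ∨
      (∃ x y : V3, x ⨯₃ y ≠ 0 ∧ isotropy (q1, q2, p1, p2) = G3 x y) := by
    intro y hy ⟨c1, hc1⟩ ⟨c2, hc2⟩ ⟨c3, hc3⟩ hyfix
    by_cases hq : q1 ⨯₃ y = 0
    · -- G2 case
      obtain ⟨c0, hc0⟩ := parallel_of_cross_eq_zero hq hy
      left
      refine ⟨y, hy, ?_⟩
      ext ⟨A, a⟩
      rw [mem_isotropy_iff]
      simp only [G2, G3, Set.mem_setOf_eq]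
      constructor
      · rintro ⟨hA, h1, h2, h3, ha⟩
        have hAy : A *ᵥ y = y := hyfix A a (by rw [mem_isotropy_iff]; exact ⟨hA, h1, h2, h3, ha⟩)
        have hq1 : A *ᵥ q1 = q1 := by rw [hc0, Matrix.mulVec_smul, hAy]
        rw [hq1, sub_self] at ha
        exact ⟨hA, hAy, ha⟩
      · rintro ⟨hA, hAy, ha⟩
        have hq1 : A *ᵥ q1 = q1 := by rw [hc0, Matrix.mulVec_smul, hAy]
        exact ⟨hA, by rw [hc1, Matrix.mulVec_smul, hAy],
          by rw [hc2, Matrix.mulVec_smul, hAy],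
          by rw [← hd, hc3, Matrix.mulVec_smul, hAy],
          by rw [hq1, sub_self, ha]⟩
    · -- G3 case
      right
      refine ⟨q1, y, hq, ?_⟩
      ext ⟨A, a⟩
      rw [mem_isotropy_iff]
      simp only [G2, G3, Set.mem_setOf_eq]
      constructor
      · rintro ⟨hA, h1, h2, h3, ha⟩
        have hAy : A *ᵥ y = y := hyfix A a (by rw [mem_isotropy_iff]; exact ⟨hA, h1, h2, h3, ha⟩)
        exact ⟨hA, hAy, ha⟩
      · rintro ⟨hA, hAy, ha⟩
        exact ⟨hA, by rw [hc1, Matrix.mulVec_smul, hAy],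
          by rw [hc2, Matrix.mulVec_smul, hAy],
          by rw [← hd, hc3, Matrix.mulVec_smul, hAy], ha⟩
  -- fixed vector extraction from membership
  have fixp1 : ∀ A : Matrix (Fin 3) (Fin 3) ℝ, ∀ a : V3,
      (A, a) ∈ isotropy (q1, q2, p1, p2) → A *ᵥ p1 = p1 := fun A a h =>
    ((mem_isotropy_iff _ _ _ _ _ _).mp h).2.1
  have fixp2 : ∀ A : Matrix (Fin 3) (Fin 3) ℝ, ∀ a : V3,
      (A, a) ∈ isotropy (q1, q2, p1, p2) → A *ᵥ p2 = p2 := fun A a h =>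
    ((mem_isotropy_iff _ _ _ _ _ _).mp h).2.2.1
  have fixd : ∀ A : Matrix (Fin 3) (Fin 3) ℝ, ∀ a : V3,
      (A, a) ∈ isotropy (q1, q2, p1, p2) → A *ᵥ d = d := fun A a h =>
    ((mem_isotropy_iff _ _ _ _ _ _).mp h).2.2.2.1
  by_cases h12 : p1 ⨯₃ p2 = 0
  · by_cases h1d : p1 ⨯₃ d = 0
    · by_cases h2d : p2 ⨯₃ d = 0
      · -- all pairwise parallel
        by_cases hp1 : p1 = 0
        · by_cases hp2 : p2 = 0
          · by_cases hdz : d = 0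
            · -- everything zero: G1 q1
              left
              refine ⟨q1, ?_⟩
              ext ⟨A, a⟩
              rw [mem_isotropy_iff]
              simp only [G1, Set.mem_setOf_eq]
              constructor
              · rintro ⟨hA, _, _, _, ha⟩
                exact ⟨hA, ha⟩
              · rintro ⟨hA, ha⟩
                exact ⟨hA, by rw [hp1, Matrix.mulVec_zero],
                  by rw [hp2, Matrix.mulVec_zero],
                  by rw [← hd, hdz, Matrix.mulVec_zero], ha⟩
            · -- y = d
              refine Or.inr ?_
              rcases Lcase d hdz ⟨0, by rw [hp1, zero_smul]⟩ ⟨0, by rw [hp2, zero_smul]⟩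
                ⟨1, by rw [one_smul]⟩ (fun A a h => fixd A a h) with h | h
              · exact Or.inl h
              · exact Or.inr (Or.inl h)
          · -- y = p2
            refine Or.inr ?_
            have hdp2 : d ⨯₃ p2 = 0 := by rw [← cross_anticomm, h2d, neg_zero]
            rcases Lcase p2 hp2 ⟨0, by rw [hp1, zero_smul]⟩ ⟨1, by rw [one_smul]⟩
              (parallel_of_cross_eq_zero hdp2 hp2) (fun A a h => fixp2 A a h) with h | h
            · exact Or.inl h
            · exact Or.inr (Or.inl h)
        · -- y = p1
          refine Or.inr ?_
          have hp2p1 : p2 ⨯₃ p1 = 0 := by rw [← cross_anticomm, h12, neg_zero]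
          have hdp1 : d ⨯₃ p1 = 0 := by rw [← cross_anticomm, h1d, neg_zero]
          rcases Lcase p1 hp1 ⟨1, by rw [one_smul]⟩ (parallel_of_cross_eq_zero hp2p1 hp1)
            (parallel_of_cross_eq_zero hdp1 hp1) (fun A a h => fixp1 A a h) with h | h
          · exact Or.inl h
          · exact Or.inr (Or.inl h)
      · exact Or.inr (Or.inr (Or.inr (G4case p2 d
          (fun A a h => ⟨fixp2 A a h, fixd A a h⟩) h2d)))
    · exact Or.inr (Or.inr (Or.inr (G4case p1 d
        (fun A a h => ⟨fixp1 A a h, fixd A a h⟩) h1d)))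
  · exact Or.inr (Or.inr (Or.inr (G4case p1 p2
      (fun A a h => ⟨fixp1 A a h, fixp2 A a h⟩) h12)))
end

section
/- For every y ∈ ℝ³ with y ≠ 0, the isotropy type set of G²(y) is the disjoint union M_{G²(y)} = B₁(y) ∪ B₂(y) ∪ B₃(y) ∪ B₄(y), where B₁(y) = {(λy, βy, 0, 0) : λ,β ∈ ℝ, λ ≠ β}, B₂(y) = {(λy, βy, 0, δy) : λ,β,δ ∈ ℝ, δ ≠ 0}, B₃(y) = {(λy, βy, γy, 0) : λ,β,γ ∈ ℝ, γ ≠ 0}, and B₄(y) = {(λy, βy, γy, δy) : λ,β,γ,δ ∈ ℝ, γ ≠ 0, δ ≠ 0}. -/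
open Matrix

def B1 (y : V3) : Set M2B := {m | ∃ l b : ℝ, l ≠ b ∧ m = (l • y, b • y, 0, 0)}
def B2 (y : V3) : Set M2B := {m | ∃ l b d : ℝ, d ≠ 0 ∧ m = (l • y, b • y, 0, d • y)}
def B3 (y : V3) : Set M2B := {m | ∃ l b c : ℝ, c ≠ 0 ∧ m = (l • y, b • y, c • y, 0)}
def B4 (y : V3) : Set M2B :=
  {m | ∃ l b c d : ℝ, c ≠ 0 ∧ d ≠ 0 ∧ m = (l • y, b • y, c • y, d • y)}

set_option maxHeartbeats 1000000

lemma smul_y_inj {y : V3} (hy : y ≠ 0) {a b : ℝ} (h : a • y = b • y) : a = b := by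
  by_contra hab
  have h1 : (a - b) • y = 0 := by rw [sub_smul, h, sub_self]
  rcases smul_eq_zero.mp h1 with h2 | h2
  · exact hab (sub_eq_zero.mp h2)
  · exact hy h2

lemma dot_self_ne {z : V3} (hz : z ≠ 0) : z ⬝ᵥ z ≠ 0 :=
  fun h => hz (dotProduct_self_eq_zero.mp h)

noncomputable def refl3 (z : V3) : Matrix (Fin 3) (Fin 3) ℝ :=
  (2 / (z ⬝ᵥ z)) • vecMulVec z z - 1

lemma refl3_apply (z : V3) (i j : Fin 3) :
    refl3 z i j = 2 * z i * z j / (z ⬝ᵥ z) - (if i = j then 1 else 0) := by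
  simp [refl3, vecMulVec, Matrix.one_apply, Matrix.sub_apply, smul_eq_mul]
  ring

lemma refl3_mulVec (z v : V3) :
    refl3 z *ᵥ v = (2 * (z ⬝ᵥ v) / (z ⬝ᵥ z)) • z - v := by
  funext i
  fin_cases i <;>
  · simp only [mulVec, dotProduct, Fin.sum_univ_three, refl3_apply, Pi.sub_apply,
      Pi.smul_apply, smul_eq_mul]
    simp
    ring

lemma SO3_refl3 {z : V3} (hz : z ≠ 0) : SO3 (refl3 z) := by
  have hs := dot_self_ne hz
  have hd : z ⬝ᵥ z = z 0 * z 0 + z 1 * z 1 + z 2 * z 2 := by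
    simp [dotProduct, Fin.sum_univ_three]
  have hs' : z 0 * z 0 + z 1 * z 1 + z 2 * z 2 ≠ 0 := hd ▸ hs
  have hs2 : z 0 ^ 2 + z 1 ^ 2 + z 2 ^ 2 ≠ 0 := by simpa [sq] using hs'
  constructor
  · ext i j
    fin_cases i <;> fin_cases j <;>
    · simp only [Matrix.mul_apply, transpose_apply, Fin.sum_univ_three, refl3_apply,
        Matrix.one_apply, hd]
      simp
      field_simp
      ring
  · rw [Matrix.det_fin_three]
    simp only [refl3_apply, hd]
    simp
    field_simp
    ring

lemma refl3_fixed {z : V3} (hz : z ≠ 0) : refl3 z *ᵥ z = z := by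
  rw [refl3_mulVec, mul_div_assoc, div_self (dot_self_ne hz), mul_one, two_smul]
  abel

lemma refl3_neg {z y : V3} (h : z ⬝ᵥ y = 0) : refl3 z *ᵥ y = -y := by
  rw [refl3_mulVec, h]
  simp

lemma refl3_fix_span {y v : V3} (hy : y ≠ 0) (h : refl3 y *ᵥ v = v) :
    v = ((y ⬝ᵥ v) / (y ⬝ᵥ y)) • y := by
  rw [refl3_mulVec] at h
  have h2 : (2 * (y ⬝ᵥ v) / (y ⬝ᵥ y)) • y = v + v := sub_eq_iff_eq_add.mp h
  have h3 : ((1:ℝ)/2) • ((2 * (y ⬝ᵥ v) / (y ⬝ᵥ y)) • y) = ((1:ℝ)/2) • (v + v) := by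
    rw [h2]
  rw [smul_smul, smul_add] at h3
  have : (1:ℝ)/2 * (2 * (y ⬝ᵥ v) / (y ⬝ᵥ y)) = (y ⬝ᵥ v) / (y ⬝ᵥ y) := by ring
  rw [this] at h3
  rw [h3]
  funext i
  simp
  ring

lemma exists_perp {y : V3} (hy : y ≠ 0) : ∃ z : V3, z ≠ 0 ∧ z ⬝ᵥ y = 0 := by
  by_cases h0 : y 0 = 0 ∧ y 1 = 0
  · refine ⟨![1, 0, 0], ?_, ?_⟩
    · intro h
      have := congrFun h 0
      norm_num at this
    · simp [dotProduct, Fin.sum_univ_three, h0.1]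
  · refine ⟨![-(y 1), y 0, 0], ?_, ?_⟩
    · intro h
      apply h0
      have h1 := congrFun h 0
      have h2 := congrFun h 1
      simp at h1 h2
      exact ⟨h2, h1⟩
    · simp [dotProduct, Fin.sum_univ_three]
      ring

lemma iso_key (y : V3) (hy : y ≠ 0) (l b c d : ℝ) (hcond : c ≠ 0 ∨ d ≠ 0 ∨ l ≠ b) :
    isotropy ((l • y, b • y, c • y, d • y) : M2B) = G2 y := by
  ext g
  obtain ⟨A, a⟩ := g
  simp only [isotropy, G2, act, Set.mem_setOf_eq, Prod.mk.injEq]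
  constructor
  · rintro ⟨hA, h1, h2, h3, h4⟩
    have hAy : A *ᵥ y = y := by
      rcases hcond with hc | hd | hlb
      · rw [mulVec_smul] at h3
        exact smul_right_injective V3 hc h3
      · rw [mulVec_smul] at h4
        exact smul_right_injective V3 hd h4
      · have hsub : (l - b) • (A *ᵥ y) = (l - b) • y := by
          have := congrArg₂ (· - ·) h1 h2
          simp only [mulVec_smul] at this ⊢
          rw [sub_smul, sub_smul]
          calc (l • (A *ᵥ y)) - b • (A *ᵥ y)
              = (l • (A *ᵥ y) + a) - (b • (A *ᵥ y) + a) := by abel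
            _ = l • y - b • y := this
        exact smul_right_injective V3 (sub_ne_zero.mpr hlb) hsub
    have ha : a = 0 := by
      rw [mulVec_smul, hAy] at h1
      have := h1
      calc a = (l • y + a) - l • y := by abel
        _ = l • y - l • y := by rw [this]
        _ = 0 := by abel
    exact ⟨hA, hAy, ha⟩
  · rintro ⟨hA, hAy, ha⟩
    subst ha
    refine ⟨hA, ?_, ?_, ?_, ?_⟩ <;> simp [mulVec_smul, hAy]

/-- The isotropy type set of G²(y) is the disjoint union B₁(y) ∪ B₂(y) ∪ B₃(y) ∪ B₄(y). -/
theorem stmt2 (y : V3) (hy : y ≠ 0) :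
    {m : M2B | isotropy m = G2 y} = B1 y ∪ B2 y ∪ B3 y ∪ B4 y ∧
    Disjoint (B1 y) (B2 y) ∧ Disjoint (B1 y) (B3 y) ∧ Disjoint (B1 y) (B4 y) ∧
    Disjoint (B2 y) (B3 y) ∧ Disjoint (B2 y) (B4 y) ∧ Disjoint (B3 y) (B4 y) := by
  have hsmul0 : ∀ c : ℝ, c ≠ 0 → c • y ≠ 0 := fun c hc h =>
    (smul_eq_zero.mp h).elim hc hy
  constructor
  · ext m
    simp only [Set.mem_setOf_eq, Set.mem_union]
    constructor
    · intro hm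
      obtain ⟨q1, q2, p1, p2⟩ := m
      -- (refl3 y, 0) ∈ G2 y = isotropy m
      have hRmem : (refl3 y, (0:V3)) ∈ isotropy (q1, q2, p1, p2) := by
        rw [hm]
        exact ⟨SO3_refl3 hy, refl3_fixed hy, rfl⟩
      obtain ⟨-, hact⟩ := hRmem
      simp only [act, add_zero, Prod.mk.injEq] at hact
      obtain ⟨e1, e2, e3, e4⟩ := hact
      set l := (y ⬝ᵥ q1) / (y ⬝ᵥ y) with hl
      set b := (y ⬝ᵥ q2) / (y ⬝ᵥ y) with hb
      set c := (y ⬝ᵥ p1) / (y ⬝ᵥ y) with hc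
      set d := (y ⬝ᵥ p2) / (y ⬝ᵥ y) with hd
      have hq1 : q1 = l • y := refl3_fix_span hy e1
      have hq2 : q2 = b • y := refl3_fix_span hy e2
      have hp1 : p1 = c • y := refl3_fix_span hy e3
      have hp2 : p2 = d • y := refl3_fix_span hy e4
      by_cases hcz : c = 0
      · by_cases hdz : d = 0
        · -- need l ≠ b
          have hlb : l ≠ b := by
            intro hlb
            obtain ⟨z, hz, hzy⟩ := exists_perp hy
            have hmem : (refl3 z, l • y - refl3 z *ᵥ (l • y)) ∈
                isotropy (q1, q2, p1, p2) := by
              refine ⟨SO3_refl3 hz, ?_⟩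
              rw [hq1, hq2, hp1, hp2, hcz, hdz, ← hlb]
              simp only [act, zero_smul, mulVec_zero]
              have hadd : refl3 z *ᵥ (l • y) + (l • y - refl3 z *ᵥ (l • y)) = l • y := by
                abel
              rw [hadd]
            rw [hm] at hmem
            obtain ⟨-, hfix, -⟩ := hmem
            rw [refl3_neg hzy] at hfix
            have hy2 : y + y = 0 := neg_eq_iff_add_eq_zero.mp hfix
            have h2 : (2:ℝ) • y = 0 := by rw [two_smul]; exact hy2
            rcases smul_eq_zero.mp h2 with h | h
            · norm_num at h
            · exact hy h
          left; left; left
          exact ⟨l, b, hlb, by rw [hq1, hq2, hp1, hp2, hcz, hdz]; simp⟩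
        · left; left; right
          exact ⟨l, b, d, hdz, by rw [hq1, hq2, hp1, hp2, hcz]; simp⟩
      · by_cases hdz : d = 0
        · left; right
          exact ⟨l, b, c, hcz, by rw [hq1, hq2, hp1, hp2, hdz]; simp⟩
        · right
          exact ⟨l, b, c, d, hcz, hdz, by rw [hq1, hq2, hp1, hp2]⟩
    · rintro (((⟨l, b, hlb, rfl⟩ | ⟨l, b, d, hd, rfl⟩) | ⟨l, b, c, hc, rfl⟩) |
        ⟨l, b, c, d, hc, hd, rfl⟩)
      · have := iso_key y hy l b 0 0 (Or.inr (Or.inr hlb))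
        simpa using this
      · have := iso_key y hy l b 0 d (Or.inr (Or.inl hd))
        simpa using this
      · have := iso_key y hy l b c 0 (Or.inl hc)
        simpa using this
      · exact iso_key y hy l b c d (Or.inl hc)
  refine ⟨?_, ?_, ?_, ?_, ?_, ?_⟩
  · rw [Set.disjoint_left]
    rintro m ⟨l, b, hlb, rfl⟩ ⟨l', b', d', hd', h⟩
    simp only [Prod.mk.injEq] at h
    exact hsmul0 d' hd' h.2.2.2.symm
  · rw [Set.disjoint_left]
    rintro m ⟨l, b, hlb, rfl⟩ ⟨l', b', c', hc', h⟩
    simp only [Prod.mk.injEq] at h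
    exact hsmul0 c' hc' h.2.2.1.symm
  · rw [Set.disjoint_left]
    rintro m ⟨l, b, hlb, rfl⟩ ⟨l', b', c', d', hc', hd', h⟩
    simp only [Prod.mk.injEq] at h
    exact hsmul0 c' hc' h.2.2.1.symm
  · rw [Set.disjoint_left]
    rintro m ⟨l, b, d, hd, rfl⟩ ⟨l', b', c', hc', h⟩
    simp only [Prod.mk.injEq] at h
    exact hsmul0 c' hc' h.2.2.1.symm
  · rw [Set.disjoint_left]
    rintro m ⟨l, b, d, hd, rfl⟩ ⟨l', b', c', d', hc', hd', h⟩
    simp only [Prod.mk.injEq] at h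
    exact hsmul0 c' hc' h.2.2.1.symm
  · rw [Set.disjoint_left]
    rintro m ⟨l, b, c, hc, rfl⟩ ⟨l', b', c', d', hc', hd', h⟩
    simp only [Prod.mk.injEq] at h
    exact hsmul0 d' hd' h.2.2.2.symm
end

section
/- The set of points of M with trivial isotropy is the disjoint union M_{G⁴} = M₁ ∪ M₂ ∪ M₃ ∪ M₄, where M₁ = {(q¹,q²,0,p²) : (q¹−q²)×p² ≠ 0}, M₂ = {(q¹,q²,p¹,0) : (q¹−q²)×p¹ ≠ 0}, M₃ = {(q¹,q²,p¹,p²) : p¹×p² = 0, p¹ ≠ 0, p² ≠ 0, (q¹−q²)×p¹ ≠ 0}, and M₄ = {(q¹,q²,p¹,p²) : p¹×p² ≠ 0}. Equivalently, SE(3)_{(q,p)} = {(I,0)} if and only if (q,p) belongs to M₁ ∪ M₂ ∪ M₃ ∪ M₄. -/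
open Matrix

def M1 : Set M2B := {m | ∃ q1 q2 p2 : V3, (q1 - q2) ⨯₃ p2 ≠ 0 ∧ m = (q1, q2, 0, p2)}
def M2 : Set M2B := {m | ∃ q1 q2 p1 : V3, (q1 - q2) ⨯₃ p1 ≠ 0 ∧ m = (q1, q2, p1, 0)}
def M3 : Set M2B :=
  {m | m.2.2.1 ⨯₃ m.2.2.2 = 0 ∧ m.2.2.1 ≠ 0 ∧ m.2.2.2 ≠ 0 ∧ (m.1 - m.2.1) ⨯₃ m.2.2.1 ≠ 0}
def M4 : Set M2B := {m | m.2.2.1 ⨯₃ m.2.2.2 ≠ 0}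

/- ### Auxiliary lemmas -/

lemma cross_zero_right' (x : V3) : x ⨯₃ (0 : V3) = 0 := by
  ext i; fin_cases i <;> simp [cross_apply]

lemma cross_zero_left' (x : V3) : (0 : V3) ⨯₃ x = 0 := by
  ext i; fin_cases i <;> simp [cross_apply]

lemma vne_iff {x : V3} : x ≠ 0 ↔ (x 0 ≠ 0 ∨ x 1 ≠ 0 ∨ x 2 ≠ 0) := by
  constructor
  · intro h
    by_contra hc
    push_neg at hc
    exact h (by ext i; fin_cases i <;> simp [hc.1, hc.2.1, hc.2.2])
  · rintro (h | h | h) he <;> simp [he] at h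

lemma dot_ne {v : V3} (hv : v ≠ 0) : v ⬝ᵥ v ≠ 0 := by
  rw [vne_iff] at hv
  simp only [dotProduct, Fin.sum_univ_three]
  intro heq
  rcases hv with h | h | h <;>
    · have := mul_self_pos.mpr h
      nlinarith [mul_self_nonneg (v 0), mul_self_nonneg (v 1),
        mul_self_nonneg (v 2)]

lemma parallel {x y : V3} (hx : x ≠ 0) (h : x ⨯₃ y = 0) : ∃ c : ℝ, y = c • x := by
  have h0 := congrFun h 0
  have h1 := congrFun h 1
  have h2 := congrFun h 2
  simp [cross_apply] at h0 h1 h2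
  rw [vne_iff] at hx
  rcases hx with hi | hi | hi
  · refine ⟨y 0 / x 0, ?_⟩
    have e0 : y 0 = ((y 0 / x 0) • x) 0 := by
      simp only [Pi.smul_apply, smul_eq_mul]; field_simp
    have e1 : y 1 = ((y 0 / x 0) • x) 1 := by
      simp only [Pi.smul_apply, smul_eq_mul]; field_simp; linear_combination h2
    have e2 : y 2 = ((y 0 / x 0) • x) 2 := by
      simp only [Pi.smul_apply, smul_eq_mul]; field_simp; linear_combination -h1
    funext j; fin_cases j
    · exact e0
    · exact e1
    · exact e2
  · refine ⟨y 1 / x 1, ?_⟩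
    have e0 : y 0 = ((y 1 / x 1) • x) 0 := by
      simp only [Pi.smul_apply, smul_eq_mul]; field_simp
      first
      | linear_combination h2 | linear_combination -h2
    have e1 : y 1 = ((y 1 / x 1) • x) 1 := by
      simp only [Pi.smul_apply, smul_eq_mul]; field_simp
    have e2 : y 2 = ((y 1 / x 1) • x) 2 := by
      simp only [Pi.smul_apply, smul_eq_mul]; field_simp
      first
      | linear_combination h0 | linear_combination -h0
    funext j; fin_cases j
    · exact e0
    · exact e1
    · exact e2
  · refine ⟨y 2 / x 2, ?_⟩
    have e0 : y 0 = ((y 2 / x 2) • x) 0 := by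
      simp only [Pi.smul_apply, smul_eq_mul]; field_simp
      first
      | linear_combination h1 | linear_combination -h1
    have e1 : y 1 = ((y 2 / x 2) • x) 1 := by
      simp only [Pi.smul_apply, smul_eq_mul]; field_simp
      first
      | linear_combination h0 | linear_combination -h0
    have e2 : y 2 = ((y 2 / x 2) • x) 2 := by
      simp only [Pi.smul_apply, smul_eq_mul]; field_simp
    funext j; fin_cases j
    · exact e0
    · exact e1
    · exact e2

/- ### The rotation by π about the axis v -/

noncomputable def rotPi (v : V3) : Matrix (Fin 3) (Fin 3) ℝ :=
  (2 / (v ⬝ᵥ v)) • vecMulVec v v - 1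

lemma NN (v : V3) : vecMulVec v v * vecMulVec v v = (v ⬝ᵥ v) • vecMulVec v v := by
  ext i j
  simp [Matrix.mul_apply, vecMulVec_apply, dotProduct, Fin.sum_univ_three, Matrix.smul_apply]
  ring

lemma det_aux (c : ℝ) (v : V3) :
    (c • vecMulVec v v - 1).det = c * (v ⬝ᵥ v) - 1 := by
  simp [det_fin_three, vecMulVec_apply, Matrix.sub_apply, Matrix.smul_apply, Matrix.one_apply,
    dotProduct, Fin.sum_univ_three]
  ring

lemma rotPi_SO3 {v : V3} (hv : v ⬝ᵥ v ≠ 0) : SO3 (rotPi v) := by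
  set s := v ⬝ᵥ v with hs
  set c : ℝ := 2 / s with hc
  set N := vecMulVec v v with hN
  have hNT : Nᵀ = N := by
    ext i j; simp [hN, vecMulVec_apply, mul_comm]
  have hcc : c * c * s = 2 * c := by rw [hc, mul_assoc, div_mul_cancel₀ _ hv, mul_comm]
  constructor
  · have : (rotPi v)ᵀ = rotPi v := by
      simp [rotPi, transpose_sub, transpose_smul, hNT, ← hN, ← hs, ← hc]
    rw [this]
    have expand : rotPi v * rotPi v = ((c*c*s) • N) - c • N - c • N + 1 := by
      simp only [rotPi, ← hs, ← hc, ← hN, sub_mul, mul_sub, one_mul, mul_one,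
        Matrix.smul_mul, Matrix.mul_smul, NN v, ← hs, ← hN, smul_smul]
      abel_nf
      rw [show N * N = s • N from NN v, smul_smul]
      ring_nf
      abel
    rw [expand, hcc]
    have : (2 * c) • N - c • N - c • N = 0 := by
      rw [two_mul, add_smul]; abel
    rw [sub_sub, ← sub_sub] at *
    abel_nf
    rw [two_mul, add_smul]
    abel
  · have := det_aux c v
    rw [rotPi, ← hc, ← hs] at *
    rw [this, hc]
    rw [div_mul_cancel₀ _ hv]; norm_num

lemma rotPi_ne_one {v : V3} (hv : v ⬝ᵥ v ≠ 0) : rotPi v ≠ 1 := by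
  intro h
  have htr := congrArg Matrix.trace h
  have hs : v 0 * v 0 + v 1 * v 1 + v 2 * v 2 ≠ 0 := by
    simpa [dotProduct, Fin.sum_univ_three] using hv
  simp [rotPi, Matrix.trace, Matrix.diag, vecMulVec_apply, Fin.sum_univ_three, dotProduct,
    Matrix.sub_apply, Matrix.smul_apply, smul_eq_mul, Matrix.one_apply] at htr
  field_simp at htr
  rw [mul_div_assoc, div_self (by simpa [sq] using hs)] at htr; norm_num at htr

lemma rotPi_fix {v x : V3} (hv : v ⬝ᵥ v ≠ 0) (hx : v ⨯₃ x = 0) : rotPi v *ᵥ x = x := by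
  have h0 := congrFun hx 0
  have h1 := congrFun hx 1
  have h2 := congrFun hx 2
  simp [cross_apply] at h0 h1 h2
  have hNx : vecMulVec v v *ᵥ x = (v ⬝ᵥ x) • v := by
    funext i
    simp [mulVec, vecMulVec_apply, dotProduct, Fin.sum_univ_three, Pi.smul_apply]
    ring
  have lag : (v ⬝ᵥ x) • v = (v ⬝ᵥ v) • x := by
    have L0 : ((v ⬝ᵥ x) • v) 0 = ((v ⬝ᵥ v) • x) 0 := by
      simp [dotProduct, Fin.sum_univ_three]
      linear_combination v 1 * h2 - v 2 * h1
    have L1 : ((v ⬝ᵥ x) • v) 1 = ((v ⬝ᵥ v) • x) 1 := by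
      simp [dotProduct, Fin.sum_univ_three]
      linear_combination v 2 * h0 - v 0 * h2
    have L2 : ((v ⬝ᵥ x) • v) 2 = ((v ⬝ᵥ v) • x) 2 := by
      simp [dotProduct, Fin.sum_univ_three]
      linear_combination v 0 * h1 - v 1 * h0
    funext j; fin_cases j
    · exact L0
    · exact L1
    · exact L2
  rw [rotPi, sub_mulVec, Matrix.smul_mulVec, hNx, lag, one_mulVec, smul_smul,
    div_mul_cancel₀ _ hv]
  funext i
  simp [Pi.smul_apply]
  ring

/- ### Rigidity: an SO(3) matrix fixing two independent vectors is the identity -/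

lemma cross_mulVec (B : Matrix (Fin 3) (Fin 3) ℝ) (u w : V3) :
    Bᵀ *ᵥ ((B *ᵥ u) ⨯₃ (B *ᵥ w)) = B.det • (u ⨯₃ w) := by
  funext i
  fin_cases i <;>
    · simp [mulVec, dotProduct, cross_apply, Fin.sum_univ_three, transpose_apply,
        det_fin_three, Pi.smul_apply, smul_eq_mul]
      ring

lemma fix_fix {A : Matrix (Fin 3) (Fin 3) ℝ} (hA : SO3 A) {u w : V3}
    (hu : A *ᵥ u = u) (hw : A *ᵥ w = w) (hc : u ⨯₃ w ≠ 0) : A = 1 := by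
  set c : V3 := u ⨯₃ w with hcv
  have hu' : Aᵀ *ᵥ u = u := by
    conv_lhs => rw [← hu]
    rw [mulVec_mulVec, hA.1, one_mulVec]
  have hw' : Aᵀ *ᵥ w = w := by
    conv_lhs => rw [← hw]
    rw [mulVec_mulVec, hA.1, one_mulVec]
  have hc' : Aᵀ *ᵥ c = c := by
    have := cross_mulVec A u w
    rwa [hu, hw, hA.2, one_smul, ← hcv] at this
  set D : Matrix (Fin 3) (Fin 3) ℝ := Aᵀ - 1 with hD
  have hDu : D *ᵥ u = 0 := by rw [hD, sub_mulVec, hu', one_mulVec, sub_self]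
  have hDw : D *ᵥ w = 0 := by rw [hD, sub_mulVec, hw', one_mulVec, sub_self]
  have hDc : D *ᵥ c = 0 := by rw [hD, sub_mulVec, hc', one_mulVec, sub_self]
  set Mr : Matrix (Fin 3) (Fin 3) ℝ := Matrix.of ![u, w, c] with hMr
  have hMD : Mr * Dᵀ = 0 := by
    ext j i
    fin_cases j <;>
      [ have h := congrFun hDu i; have h := congrFun hDw i; have h := congrFun hDc i] <;>
      · simp [hMr, Matrix.mul_apply, transpose_apply, mulVec, dotProduct,
          Fin.sum_univ_three] at h ⊢
        linarith
  have hdet : Mr.det = c 0 * c 0 + c 1 * c 1 + c 2 * c 2 := by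
    simp [hMr, det_fin_three, hcv, cross_apply]
    ring
  have hdne : IsUnit Mr.det := by
    rw [hdet, isUnit_iff_ne_zero]
    rw [vne_iff] at hc
    intro h
    rcases hc with h' | h' | h' <;> nlinarith [mul_self_nonneg (c 0),
      mul_self_nonneg (c 1), mul_self_nonneg (c 2), mul_self_pos.mpr h']
  have hDT : Dᵀ = 0 := by
    calc Dᵀ = (Mr⁻¹ * Mr) * Dᵀ := by rw [Matrix.nonsing_inv_mul Mr hdne, one_mul]
    _ = Mr⁻¹ * (Mr * Dᵀ) := by rw [Matrix.mul_assoc]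
    _ = 0 := by rw [hMD, Matrix.mul_zero]
  have hD0 : D = 0 := by
    have := congrArg Matrix.transpose hDT
    simpa using this
  have hAT : Aᵀ = 1 := by rwa [hD, sub_eq_zero] at hD0
  calc A = Aᵀᵀ := by rw [transpose_transpose]
  _ = 1 := by rw [hAT, transpose_one]

/- ### The two main directions -/

lemma iso_triv {m : M2B}
    (H : ∀ A : Matrix (Fin 3) (Fin 3) ℝ, SO3 A → A *ᵥ (m.1 - m.2.1) = m.1 - m.2.1 →
      A *ᵥ m.2.2.1 = m.2.2.1 → A *ᵥ m.2.2.2 = m.2.2.2 → A = 1) :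
    isotropy m = G4 := by
  ext g
  obtain ⟨A, a⟩ := g
  simp only [isotropy, G4, Set.mem_setOf_eq, Set.mem_singleton_iff]
  constructor
  · rintro ⟨hSO, hact⟩
    unfold act at hact
    have e1 : A *ᵥ m.1 + a = m.1 := congrArg Prod.fst hact
    have e2 : A *ᵥ m.2.1 + a = m.2.1 := congrArg Prod.fst (congrArg Prod.snd hact)
    have e3 : A *ᵥ m.2.2.1 = m.2.2.1 :=
      congrArg Prod.fst (congrArg Prod.snd (congrArg Prod.snd hact))
    have e4 : A *ᵥ m.2.2.2 = m.2.2.2 :=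
      congrArg Prod.snd (congrArg Prod.snd (congrArg Prod.snd hact))
    have hd : A *ᵥ (m.1 - m.2.1) = m.1 - m.2.1 := by
      rw [mulVec_sub]
      have f1 : A *ᵥ m.1 = m.1 - a := eq_sub_of_add_eq e1
      have f2 : A *ᵥ m.2.1 = m.2.1 - a := eq_sub_of_add_eq e2
      rw [f1, f2]; abel
    have hA : A = 1 := H A hSO hd e3 e4
    have ha : a = 0 := by
      rw [hA, one_mulVec] at e1
      exact (add_eq_left).mp e1
    rw [hA, ha]
  · intro h
    rw [Prod.mk.injEq] at h
    rw [h.1, h.2]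
    refine ⟨⟨by rw [transpose_one, one_mul], det_one⟩, ?_⟩
    unfold act
    simp only [one_mulVec, add_zero]

lemma nontriv {m : M2B}
    (h1 : (m.1 - m.2.1) ⨯₃ m.2.2.1 = 0) (h2 : (m.1 - m.2.1) ⨯₃ m.2.2.2 = 0)
    (h3 : m.2.2.1 ⨯₃ m.2.2.2 = 0) : isotropy m ≠ G4 := by
  obtain ⟨v, hv, hd, hp1, hp2⟩ : ∃ v : V3, v ⬝ᵥ v ≠ 0 ∧
      rotPi v *ᵥ (m.1 - m.2.1) = m.1 - m.2.1 ∧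
      rotPi v *ᵥ m.2.2.1 = m.2.2.1 ∧ rotPi v *ᵥ m.2.2.2 = m.2.2.2 := by
    by_cases hd0 : m.1 - m.2.1 = 0
    · by_cases hq1 : m.2.2.1 = 0
      · by_cases hq2 : m.2.2.2 = 0
        · refine ⟨![1, 0, 0], by simp only [dotProduct, Fin.sum_univ_three]; show (1:ℝ)*1 + 0*0 + 0*0 ≠ 0; norm_num, ?_, ?_, ?_⟩ <;>
            simp [hd0, hq1, hq2, mulVec_zero]
        · refine ⟨m.2.2.2, dot_ne hq2, ?_, ?_, ?_⟩
          · simp [hd0, mulVec_zero]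
          · simp [hq1, mulVec_zero]
          · exact rotPi_fix (dot_ne hq2) (cross_self _)
      · refine ⟨m.2.2.1, dot_ne hq1, ?_, ?_, ?_⟩
        · simp [hd0, mulVec_zero]
        · exact rotPi_fix (dot_ne hq1) (cross_self _)
        · exact rotPi_fix (dot_ne hq1) h3
    · refine ⟨m.1 - m.2.1, dot_ne hd0, ?_, ?_, ?_⟩
      · exact rotPi_fix (dot_ne hd0) (cross_self _)
      · exact rotPi_fix (dot_ne hd0) h1
      · exact rotPi_fix (dot_ne hd0) h2
  intro hG4
  have mem : (rotPi v, m.1 - rotPi v *ᵥ m.1) ∈ isotropy m := by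
    refine ⟨rotPi_SO3 hv, ?_⟩
    unfold act
    have g2 : rotPi v *ᵥ m.2.1 + (m.1 - rotPi v *ᵥ m.1) = m.2.1 := by
      rw [mulVec_sub] at hd
      have : rotPi v *ᵥ m.2.1 = rotPi v *ᵥ m.1 - (m.1 - m.2.1) := by
        rw [← hd]; abel
      rw [this]; abel
    have g1 : rotPi v *ᵥ m.1 + (m.1 - rotPi v *ᵥ m.1) = m.1 := by abel
    rw [g1, g2, hp1, hp2]
  rw [hG4] at mem
  simp only [G4, Set.mem_singleton_iff, Prod.mk.injEq] at mem
  exact rotPi_ne_one hv mem.1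

lemma key_iff (m : M2B) : isotropy m = G4 ↔ m ∈ M1 ∪ M2 ∪ M3 ∪ M4 := by
  constructor
  · intro hiso
    by_contra hnot
    simp only [Set.mem_union, not_or] at hnot
    obtain ⟨⟨⟨hn1, hn2⟩, hn3⟩, hn4⟩ := hnot
    have h3 : m.2.2.1 ⨯₃ m.2.2.2 = 0 := by
      by_contra h; exact hn4 h
    have hd12 : (m.1 - m.2.1) ⨯₃ m.2.2.1 = 0 ∧ (m.1 - m.2.1) ⨯₃ m.2.2.2 = 0 := by
      by_cases hp1 : m.2.2.1 = 0
      · refine ⟨by rw [hp1, cross_zero_right'], ?_⟩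
        by_contra hc
        exact hn1 ⟨m.1, m.2.1, m.2.2.2, hc, by rw [← hp1]⟩
      · by_cases hp2 : m.2.2.2 = 0
        · refine ⟨?_, by rw [hp2, cross_zero_right']⟩
          by_contra hc
          exact hn2 ⟨m.1, m.2.1, m.2.2.1, hc, by rw [← hp2]⟩
        · have hd1 : (m.1 - m.2.1) ⨯₃ m.2.2.1 = 0 := by
            by_contra hc
            exact hn3 ⟨h3, hp1, hp2, hc⟩
          obtain ⟨cc, hcc⟩ := parallel hp1 h3
          refine ⟨hd1, ?_⟩
          rw [hcc, LinearMap.map_smul, hd1, smul_zero]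
    exact nontriv hd12.1 hd12.2 h3 hiso
  · intro h
    apply iso_triv
    intro A hSO hd h3 h4
    rcases h with ((h | h) | h) | h
    · obtain ⟨q1, q2, p2, hcr, rfl⟩ := h
      exact fix_fix hSO hd h4 hcr
    · obtain ⟨q1, q2, p1, hcr, rfl⟩ := h
      exact fix_fix hSO hd h3 hcr
    · exact fix_fix hSO hd h3 h.2.2.2
    · exact fix_fix hSO h3 h4 h

/-- The set of points with trivial isotropy is the disjoint union M₁ ∪ M₂ ∪ M₃ ∪ M₄;
equivalently SE(3)_{(q,p)} = {(I,0)} iff (q,p) ∈ M₁ ∪ M₂ ∪ M₃ ∪ M₄. -/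
theorem stmt4 :
    ({m : M2B | isotropy m = G4} = M1 ∪ M2 ∪ M3 ∪ M4 ∧
      Disjoint M1 M2 ∧ Disjoint M1 M3 ∧ Disjoint M1 M4 ∧
      Disjoint M2 M3 ∧ Disjoint M2 M4 ∧ Disjoint M3 M4) ∧
    ∀ m : M2B, isotropy m = G4 ↔ m ∈ M1 ∪ M2 ∪ M3 ∪ M4 := by
  have hM1p1 : ∀ m ∈ M1, m.2.2.1 = 0 := by
    rintro m ⟨q1, q2, p2, hc, rfl⟩; rfl
  have hM2p2 : ∀ m ∈ M2, m.2.2.2 = 0 := by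
    rintro m ⟨q1, q2, p1, hc, rfl⟩; rfl
  have hM2c : ∀ m ∈ M2, (m.1 - m.2.1) ⨯₃ m.2.2.1 ≠ 0 := by
    rintro m ⟨q1, q2, p1, hc, rfl⟩; exact hc
  refine ⟨⟨Set.ext key_iff, ?_, ?_, ?_, ?_, ?_, ?_⟩, key_iff⟩
  · rw [Set.disjoint_left]
    intro m h1 h2
    exact hM2c m h2 (by rw [hM1p1 m h1, cross_zero_right'])
  · rw [Set.disjoint_left]
    intro m h1 h2
    exact h2.2.1 (hM1p1 m h1)
  · rw [Set.disjoint_left]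
    intro m h1 h2
    exact h2 (by rw [hM1p1 m h1, cross_zero_left'])
  · rw [Set.disjoint_left]
    intro m h1 h2
    exact h2.2.2.1 (hM2p2 m h1)
  · rw [Set.disjoint_left]
    intro m h1 h2
    exact h2 (by rw [hM2p2 m h1, cross_zero_right'])
  · rw [Set.disjoint_left]
    intro m h1 h2
    exact h2 h1.1
end

section
/- (Optimal isotropy group of Case 2) Let y₀ ∈ ℝ³, y₀ ≠ 0, and let S = J⁻¹(0,0) ∩ M_{G²(y₀)}. Then an element (A,a) ∈ SE(3) satisfies (A,a)·S = S if and only if (Ay₀ = y₀ or Ay₀ = −y₀) and a = η y₀ for some η ∈ ℝ. -/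
open Matrix

lemma vmv (y v : V3) : vecMulVec y y *ᵥ v = (y ⬝ᵥ v) • y := by
  ext i
  simp only [vecMulVec_apply, mulVec, dotProduct, Pi.smul_apply, smul_eq_mul, Finset.sum_mul, of_apply]
  exact Finset.sum_congr rfl fun x _ => by ring

lemma orth_dot (A : Matrix (Fin 3) (Fin 3) ℝ) (h : Aᵀ * A = 1) (v w : V3) :
    (A *ᵥ v) ⬝ᵥ (A *ᵥ w) = v ⬝ᵥ w := by
  rw [dotProduct_mulVec, ← mulVec_transpose, mulVec_mulVec, h, one_mulVec]

noncomputable def Rm (y : V3) : Matrix (Fin 3) (Fin 3) ℝ :=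
  ((2 : ℝ)/(y ⬝ᵥ y)) • vecMulVec y y - 1

lemma Rm_apply (y : V3) (i j : Fin 3) :
    Rm y i j = (2 : ℝ)/(y ⬝ᵥ y) * (y i * y j) - if i = j then 1 else 0 := by
  simp [Rm, vecMulVec_apply, one_apply]

lemma Rm_tr (y : V3) : (Rm y)ᵀ = Rm y := by
  ext i j
  rw [transpose_apply, Rm_apply, Rm_apply]
  by_cases h : i = j
  · subst h; ring
  · rw [if_neg h, if_neg (fun e => h e.symm)]; ring

lemma vmvmul (y : V3) : vecMulVec y y * vecMulVec y y = (y ⬝ᵥ y) • vecMulVec y y := by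
  ext i j
  simp only [mul_apply, vecMulVec_apply, Matrix.smul_apply, smul_eq_mul, dotProduct, Finset.sum_mul, of_apply]
  exact Finset.sum_congr rfl fun x _ => by ring

lemma Rm_orth (y : V3) (hy : y ≠ 0) : (Rm y)ᵀ * Rm y = 1 := by
  have hd : y ⬝ᵥ y ≠ 0 := fun h => hy ((dotProduct_self_eq_zero).mp h)
  rw [Rm_tr]
  simp only [Rm, sub_mul, mul_sub, smul_mul_assoc, mul_smul_comm, vmvmul, smul_smul, one_mul, mul_one]
  rw [show ((2:ℝ) / (y ⬝ᵥ y) * (y ⬝ᵥ y)) = 2 from div_mul_cancel₀ _ hd]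
  module

lemma Rm_det (y : V3) (hy : y ≠ 0) : (Rm y).det = 1 := by
  have hd : y ⬝ᵥ y ≠ 0 := fun h => hy ((dotProduct_self_eq_zero).mp h)
  have hc : (2 : ℝ)/(y ⬝ᵥ y) * (y 0 * y 0 + y 1 * y 1 + y 2 * y 2) = 2 := by
    rw [show y 0 * y 0 + y 1 * y 1 + y 2 * y 2 = y ⬝ᵥ y by simp [dotProduct, Fin.sum_univ_three]]
    exact div_mul_cancel₀ _ hd
  set c := (2 : ℝ)/(y ⬝ᵥ y) with hcdef
  rw [det_fin_three]
  simp only [Rm_apply, ← hcdef]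
  norm_num [Fin.ext_iff]
  linear_combination hc

lemma Rm_SO3 (y : V3) (hy : y ≠ 0) : SO3 (Rm y) := ⟨Rm_orth y hy, Rm_det y hy⟩

lemma Rm_mulVec (y v : V3) : Rm y *ᵥ v = ((2 : ℝ)/(y ⬝ᵥ y) * (y ⬝ᵥ v)) • y - v := by
  simp [Rm, sub_mulVec, smul_mulVec, vmv, smul_smul]

lemma Rm_fix (y : V3) (hy : y ≠ 0) : Rm y *ᵥ y = y := by
  have hd : y ⬝ᵥ y ≠ 0 := fun h => hy ((dotProduct_self_eq_zero).mp h)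
  rw [Rm_mulVec, div_mul_cancel₀ _ hd]
  module

lemma Rm_fixed (y v : V3) (h : Rm y *ᵥ v = v) : ∃ c : ℝ, v = c • y := by
  rw [Rm_mulVec, sub_eq_iff_eq_add] at h
  refine ⟨(2 : ℝ)/(y ⬝ᵥ y) * (y ⬝ᵥ v) / 2, ?_⟩
  have h2 : (2:ℝ) • v = ((2 : ℝ)/(y ⬝ᵥ y) * (y ⬝ᵥ v)) • y := by rw [h]; module
  have := congrArg (fun w => ((2:ℝ)⁻¹) • w) h2
  simpa [smul_smul, div_eq_mul_inv, mul_comm] using this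

lemma smul_cancel {y : V3} (hy : y ≠ 0) {c d : ℝ} (h : c • y = d • y) : c = d := by
  have : (c - d) • y = 0 := by rw [sub_smul, h, sub_self]
  rcases smul_eq_zero.mp this with h' | h'
  · linarith [sub_eq_zero.mp (by exact_mod_cast h')]
  · exact absurd h' hy

lemma exists_bad (y : V3) (hy : y ≠ 0) : ∃ B, SO3 B ∧ B *ᵥ y ≠ y := by
  obtain ⟨i, hi⟩ := Function.ne_iff.mp hy
  refine ⟨diagonal (fun k => if k = i + 1 then 1 else -1), ⟨?_, ?_⟩, ?_⟩
  · rw [diagonal_transpose, diagonal_mul_diagonal]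
    convert diagonal_one using 2
    ext k
    by_cases h : k = i + 1 <;> simp [h]
  · rw [det_diagonal, Fin.prod_univ_three]
    fin_cases i <;> norm_num [Fin.ext_iff, Fin.add_def]
  · intro h
    have := congrFun h i
    rw [mulVec_diagonal] at this
    have hne : i ≠ i + 1 := by fin_cases i <;> decide
    rw [if_neg hne] at this
    apply hi
    simp only [Pi.zero_apply]
    nlinarith [this]

lemma cross_smul_smul (c d : ℝ) (a b : V3) : (c • a) ⨯₃ (d • b) = (c*d) • (a ⨯₃ b) := by
  rw [LinearMap.map_smul, _root_.map_smul, LinearMap.smul_apply, smul_smul, mul_comm d c]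

lemma mem_S_iff (y0 : V3) (hy : y0 ≠ 0) (m : M2B) :
    (Jmom m = (0, 0) ∧ isotropy m = G2 y0) ↔
    ∃ α₁ α₂ β : ℝ, m = (α₁ • y0, α₂ • y0, β • y0, (-β) • y0) ∧ (β ≠ 0 ∨ α₁ ≠ α₂) := by
  obtain ⟨q1, q2, p1, p2⟩ := m
  constructor
  · rintro ⟨hJ, hIso⟩
    have hR : (Rm y0, (0:V3)) ∈ G2 y0 := ⟨Rm_SO3 y0 hy, Rm_fix y0 hy, rfl⟩
    rw [← hIso] at hR
    obtain ⟨-, hact⟩ := hR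
    simp only [act, add_zero, Prod.mk.injEq] at hact
    obtain ⟨e1, e2, e3, e4⟩ := hact
    obtain ⟨α₁, h1⟩ := Rm_fixed y0 _ e1
    obtain ⟨α₂, h2⟩ := Rm_fixed y0 _ e2
    obtain ⟨β, h3⟩ := Rm_fixed y0 _ e3
    obtain ⟨γ, h4⟩ := Rm_fixed y0 _ e4
    have hp : p1 + p2 = 0 := by
      have := congrArg Prod.snd hJ; simpa [Jmom] using this
    have hγ : γ = -β := by
      rw [h3, h4] at hp
      have h5 : (β + γ) • y0 = (0:ℝ) • y0 := by rw [add_smul, hp, zero_smul]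
      have := smul_cancel hy h5
      linarith
    refine ⟨α₁, α₂, β, ?_, ?_⟩
    · rw [← h1, ← h2, ← h3, show (-β) • y0 = p2 by rw [h4, hγ]]
    · by_contra hcon
      push_neg at hcon
      obtain ⟨hβ0, hα⟩ := hcon
      obtain ⟨B, hB, hBy⟩ := exists_bad y0 hy
      have hmem : (B, α₁ • y0 - B *ᵥ (α₁ • y0)) ∈ isotropy (q1, q2, p1, p2) := by
        refine ⟨hB, ?_⟩
        simp only [act, Prod.mk.injEq]
        refine ⟨?_, ?_, ?_, ?_⟩
        · rw [h1]; abel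
        · rw [h2, hα]; abel
        · rw [h3, hβ0, zero_smul, mulVec_zero]
        · rw [h4, hγ, hβ0, neg_zero, zero_smul, mulVec_zero]
      rw [hIso] at hmem
      exact hBy hmem.2.1
  · rintro ⟨α₁, α₂, β, heq, hne⟩
    simp only [Prod.mk.injEq] at heq
    obtain ⟨h1, h2, h3, h4⟩ := heq
    subst h1; subst h2; subst h3; subst h4
    constructor
    · simp only [Jmom, Prod.mk.injEq]
      constructor
      · rw [cross_smul_smul, cross_smul_smul, cross_self, smul_zero, smul_zero, add_zero]
      · module
    · ext g
      obtain ⟨A', a'⟩ := g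
      simp only [isotropy, G2, Set.mem_setOf_eq]
      constructor
      · rintro ⟨hso, hact⟩
        simp only [act, Prod.mk.injEq] at hact
        obtain ⟨e1, e2, e3, e4⟩ := hact
        have hAy : A' *ᵥ y0 = y0 := by
          rcases hne with hβ | hα
          · have h5 := e3
            rw [mulVec_smul] at h5
            exact smul_right_injective V3 hβ h5
          · have f1 : A' *ᵥ (α₁ • y0) = α₁ • y0 - a' := eq_sub_of_add_eq e1
            have f2 : A' *ᵥ (α₂ • y0) = α₂ • y0 - a' := eq_sub_of_add_eq e2
            have f3 : (α₁ - α₂) • (A' *ᵥ y0) = (α₁ - α₂) • y0 := by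
              rw [← mulVec_smul, sub_smul, mulVec_sub, f1, f2]
              module
            exact smul_right_injective V3 (sub_ne_zero.mpr hα) f3
        have ha0 : a' = 0 := by
          rw [mulVec_smul, hAy] at e1
          exact add_left_cancel (by rw [e1, add_zero])
        exact ⟨hso, hAy, ha0⟩
      · rintro ⟨hso, hAy, ha0⟩
        refine ⟨hso, ?_⟩
        simp only [act, Prod.mk.injEq, ha0, add_zero]
        refine ⟨?_, ?_, ?_, ?_⟩ <;> rw [mulVec_smul, hAy]


/-- Optimal isotropy group of Case 2: (A,a) preserves S = J⁻¹(0,0) ∩ M_{G²(y₀)}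
iff Ay₀ = ±y₀ and a = ηy₀ for some η. -/
theorem stmt9 (y0 : V3) (hy : y0 ≠ 0) (A : Matrix (Fin 3) (Fin 3) ℝ) (a : V3)
    (hA : SO3 A) :
    act A a '' {m : M2B | Jmom m = (0, 0) ∧ isotropy m = G2 y0} =
        {m : M2B | Jmom m = (0, 0) ∧ isotropy m = G2 y0} ↔
      ((A *ᵥ y0 = y0 ∨ A *ᵥ y0 = -y0) ∧ ∃ η : ℝ, a = η • y0) := by
  have hS := mem_S_iff y0 hy
  have hd : y0 ⬝ᵥ y0 ≠ 0 := fun h => hy ((dotProduct_self_eq_zero).mp h)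
  constructor
  · intro h
    have hm0 : ((0:ℝ) • y0, (0:ℝ) • y0, (1:ℝ) • y0, (-(1:ℝ)) • y0) ∈
        {m : M2B | Jmom m = (0, 0) ∧ isotropy m = G2 y0} :=
      (hS _).mpr ⟨0, 0, 1, rfl, Or.inl one_ne_zero⟩
    have himg := h ▸ Set.mem_image_of_mem (act A a) hm0
    obtain ⟨α₁, α₂, β, heq, hne⟩ := (hS _).mp himg
    simp only [act, Prod.mk.injEq] at heq
    obtain ⟨e1, e2, e3, e4⟩ := heq
    have ha : a = α₁ • y0 := by
      rw [zero_smul, mulVec_zero, zero_add] at e1; exact e1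
    have hAy : A *ᵥ y0 = β • y0 := by
      rw [one_smul] at e3; exact e3
    have hβ2 : β * β = 1 := by
      have h2 := orth_dot A hA.1 y0 y0
      rw [hAy, smul_dotProduct, dotProduct_smul, smul_eq_mul, smul_eq_mul] at h2
      have : (β * β) * (y0 ⬝ᵥ y0) = 1 * (y0 ⬝ᵥ y0) := by linear_combination h2
      exact mul_right_cancel₀ hd this
    refine ⟨?_, α₁, ha⟩
    rcases mul_self_eq_one_iff.mp hβ2 with hβ | hβ
    · left; rw [hAy, hβ, one_smul]
    · right; rw [hAy, hβ]; module
  · rintro ⟨hAy, η, rfl⟩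
    obtain ⟨ε, hε, hAy'⟩ : ∃ ε : ℝ, ε * ε = 1 ∧ A *ᵥ y0 = ε • y0 := by
      rcases hAy with h | h
      · exact ⟨1, by norm_num, by rw [h, one_smul]⟩
      · exact ⟨-1, by norm_num, by rw [h]; module⟩
    have hεne : ε ≠ 0 := fun h0 => by rw [h0, mul_zero] at hε; exact zero_ne_one hε
    ext m
    constructor
    · rintro ⟨m', hm', rfl⟩
      obtain ⟨α₁, α₂, β, rfl, hne⟩ := (hS _).mp hm'
      refine (hS _).mpr ⟨ε*α₁+η, ε*α₂+η, ε*β, ?_, ?_⟩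
      · simp only [act, Prod.mk.injEq]
        refine ⟨?_, ?_, ?_, ?_⟩ <;> rw [mulVec_smul, hAy', smul_smul] <;> module
      · rcases hne with hβ | hα
        · exact Or.inl (mul_ne_zero hεne hβ)
        · refine Or.inr fun hcon => hα ?_
          have : ε * α₁ = ε * α₂ := by linarith
          exact mul_left_cancel₀ hεne this
    · intro hm
      obtain ⟨α₁, α₂, β, rfl, hne⟩ := (hS _).mp hm
      refine ⟨((ε*(α₁-η)) • y0, (ε*(α₂-η)) • y0, (ε*β) • y0, (-(ε*β)) • y0),
        (hS _).mpr ⟨ε*(α₁-η), ε*(α₂-η), ε*β, rfl, ?_⟩, ?_⟩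
      · rcases hne with hβ | hα
        · exact Or.inl (mul_ne_zero hεne hβ)
        · refine Or.inr fun hcon => hα ?_
          have := mul_left_cancel₀ hεne hcon
          linarith
      · simp only [act, Prod.mk.injEq]
        refine ⟨?_, ?_, ?_, ?_⟩ <;> rw [mulVec_smul, hAy', smul_smul]
        · rw [show ε*(α₁-η)*ε = α₁-η from by linear_combination (α₁-η)*hε]; module
        · rw [show ε*(α₂-η)*ε = α₂-η from by linear_combination (α₂-η)*hε]; module
        · rw [show ε*β*ε = β from by linear_combination β*hε]
        · rw [show -(ε*β)*ε = -β from by linear_combination (-β)*hε]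
end

section
/- (Case 3) Let y₀ ∈ ℝ³, y₀ ≠ 0, and δ₀ ∈ ℝ, δ₀ ≠ 0. Then J⁻¹(0, δ₀y₀) ∩ M_{G²(y₀)} = {(λy₀, βy₀, γy₀, (δ₀−γ)y₀) : λ,β,γ ∈ ℝ}; in particular this set is path-connected. -/
open Matrix

noncomputable def projMat (y : V3) : Matrix (Fin 3) (Fin 3) ℝ :=
  Matrix.of fun i j => y i * y j / (y 0 ^ 2 + y 1 ^ 2 + y 2 ^ 2)

noncomputable def flipMat (y : V3) : Matrix (Fin 3) (Fin 3) ℝ :=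
  (2 : ℝ) • projMat y - 1

lemma v3_ext {u v : V3} (h0 : u 0 = v 0) (h1 : u 1 = v 1) (h2 : u 2 = v 2) : u = v := by
  funext i
  fin_cases i
  · exact h0
  · exact h1
  · exact h2

lemma norm2_ne_zero (y : V3) (hy : y ≠ 0) :
    y 0 ^ 2 + y 1 ^ 2 + y 2 ^ 2 ≠ 0 := by
  intro h
  apply hy
  apply v3_ext <;>
    · show _ = (0:ℝ)
      nlinarith [sq_nonneg (y 0), sq_nonneg (y 1), sq_nonneg (y 2)]

lemma proj_symm (y : V3) : (projMat y)ᵀ = projMat y := by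
  ext i j; simp [projMat, Matrix.transpose_apply]; ring

lemma proj_sq (y : V3) (hy : y ≠ 0) : projMat y * projMat y = projMat y := by
  have hn := norm2_ne_zero y hy
  ext i j
  simp [projMat, Matrix.mul_apply, Fin.sum_univ_three]
  field_simp

lemma proj_mulVec (y : V3) (hy : y ≠ 0) (v : V3) :
    projMat y *ᵥ v = ((y 0 * v 0 + y 1 * v 1 + y 2 * v 2) / (y 0 ^ 2 + y 1 ^ 2 + y 2 ^ 2)) • y := by
  have hn := norm2_ne_zero y hy
  funext i
  simp [projMat, Matrix.mulVec, dotProduct, Fin.sum_univ_three]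
  field_simp

lemma flip_so3 (y : V3) (hy : y ≠ 0) : SO3 (flipMat y) := by
  have hn := norm2_ne_zero y hy
  constructor
  · have ht : (flipMat y)ᵀ = flipMat y := by
      simp [flipMat, Matrix.transpose_sub, Matrix.transpose_smul, proj_symm]
    rw [ht, flipMat]
    rw [sub_mul, mul_sub, mul_sub, smul_mul_smul_comm, proj_sq y hy]
    simp [smul_smul]
    abel_nf
    rw [show ((2:ℝ)*2) • projMat y = (2:ℝ) • projMat y + (2:ℝ) • projMat y by
      rw [← add_smul]; norm_num]
    abel
  · rw [Matrix.det_fin_three]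
    simp [flipMat, Matrix.sub_apply, Matrix.smul_apply, projMat, Matrix.one_apply]
    field_simp
    ring

lemma flip_fixes (y : V3) (hy : y ≠ 0) : flipMat y *ᵥ y = y := by
  have hn := norm2_ne_zero y hy
  rw [flipMat, Matrix.sub_mulVec, Matrix.smul_mulVec, proj_mulVec y hy]
  have : (y 0 * y 0 + y 1 * y 1 + y 2 * y 2) / (y 0 ^ 2 + y 1 ^ 2 + y 2 ^ 2) = 1 := by
    field_simp
  rw [this, Matrix.one_mulVec, one_smul, two_smul]
  abel

lemma flip_fix_eigen (y : V3) (hy : y ≠ 0) (v : V3) (h : flipMat y *ᵥ v = v) :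
    ∃ t : ℝ, v = t • y := by
  have hn := norm2_ne_zero y hy
  refine ⟨(y 0 * v 0 + y 1 * v 1 + y 2 * v 2) / (y 0 ^ 2 + y 1 ^ 2 + y 2 ^ 2), ?_⟩
  rw [flipMat, Matrix.sub_mulVec, Matrix.smul_mulVec, proj_mulVec y hy,
    Matrix.one_mulVec, smul_smul, sub_eq_iff_eq_add] at h
  have h2 : (2 * ((y 0 * v 0 + y 1 * v 1 + y 2 * v 2) / (y 0 ^ 2 + y 1 ^ 2 + y 2 ^ 2))) • y
      = v + v := h
  have h3 := congrArg (fun w => ((1:ℝ)/2) • w) h2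
  simp only [smul_smul, smul_add] at h3
  rw [show (1:ℝ)/2 * (2 * ((y 0 * v 0 + y 1 * v 1 + y 2 * v 2) / (y 0 ^ 2 + y 1 ^ 2 + y 2 ^ 2)))
      = (y 0 * v 0 + y 1 * v 1 + y 2 * v 2) / (y 0 ^ 2 + y 1 ^ 2 + y 2 ^ 2) by ring] at h3
  have hv : ((1:ℝ)/2) • v + ((1:ℝ)/2) • v = v := by
    rw [← add_smul]; norm_num
  rw [hv] at h3
  exact h3.symm

/-- Case 3: J⁻¹(0, δ₀y₀) ∩ M_{G²(y₀)} has the stated parametrization and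
is path-connected. -/
theorem stmt10 (y0 : V3) (hy : y0 ≠ 0) (d0 : ℝ) (hd : d0 ≠ 0) :
    {m : M2B | Jmom m = (0, d0 • y0) ∧ isotropy m = G2 y0} =
      {m : M2B | ∃ l b c : ℝ, m = (l • y0, b • y0, c • y0, (d0 - c) • y0)} ∧
    IsPathConnected {m : M2B | Jmom m = (0, d0 • y0) ∧ isotropy m = G2 y0} := by
  have key : {m : M2B | Jmom m = (0, d0 • y0) ∧ isotropy m = G2 y0} =
      {m : M2B | ∃ l b c : ℝ, m = (l • y0, b • y0, c • y0, (d0 - c) • y0)} := by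
    ext m
    simp only [Set.mem_setOf_eq]
    constructor
    · rintro ⟨hJ, hiso⟩
      obtain ⟨q1, q2, p1, p2⟩ := m
      have hmem : ((flipMat y0, (0:V3)) : Matrix (Fin 3) (Fin 3) ℝ × V3)
          ∈ isotropy (q1, q2, p1, p2) := by
        rw [hiso]
        exact ⟨flip_so3 y0 hy, flip_fixes y0 hy, rfl⟩
      obtain ⟨-, hact⟩ := hmem
      simp only [act, add_zero, Prod.mk.injEq] at hact
      obtain ⟨h1, h2, h3, h4⟩ := hact
      obtain ⟨l, hl⟩ := flip_fix_eigen y0 hy q1 h1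
      obtain ⟨b, hb⟩ := flip_fix_eigen y0 hy q2 h2
      obtain ⟨c, hc⟩ := flip_fix_eigen y0 hy p1 h3
      obtain ⟨e, he⟩ := flip_fix_eigen y0 hy p2 h4
      have hJ2 : p1 + p2 = d0 • y0 := congrArg Prod.snd hJ
      rw [hc, he, ← add_smul] at hJ2
      have hce : c + e - d0 = 0 := by
        have : (c + e - d0) • y0 = 0 := by
          rw [sub_smul, hJ2, sub_self]
        rcases smul_eq_zero.mp this with h | h
        · exact h
        · exact absurd h hy
      have he' : e = d0 - c := by linarith
      exact ⟨l, b, c, by rw [hl, hb, hc, he, he']⟩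
    · rintro ⟨l, b, c, rfl⟩
      constructor
      · simp only [Jmom, Prod.mk.injEq]
        constructor
        · show (l • y0) ⨯₃ (c • y0) + (b • y0) ⨯₃ ((d0 - c) • y0) = 0
          simp [_root_.map_smul, LinearMap.smul_apply, cross_self, smul_smul]
        · show c • y0 + (d0 - c) • y0 = d0 • y0
          rw [← add_smul]; ring_nf
      · ext g
        obtain ⟨A, a⟩ := g
        simp only [isotropy, G2, act, Set.mem_setOf_eq, Prod.mk.injEq]
        constructor
        · rintro ⟨hso, hq1, hq2, hp1, hp2⟩
          have hAy : A *ᵥ y0 = y0 := by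
            rcases eq_or_ne c 0 with hc0 | hc0
            · have hdc : d0 - c ≠ 0 := by rw [hc0, sub_zero]; exact hd
              rw [Matrix.mulVec_smul] at hp2
              exact smul_right_injective V3 hdc hp2
            · rw [Matrix.mulVec_smul] at hp1
              exact smul_right_injective V3 hc0 hp1
          refine ⟨hso, hAy, ?_⟩
          rw [Matrix.mulVec_smul, hAy] at hq1
          have := hq1
          nth_rewrite 2 [← add_zero (l • y0)] at this
          exact add_left_cancel this
        · rintro ⟨hso, hAy, ha⟩
          subst ha
          refine ⟨hso, ?_, ?_, ?_, ?_⟩ <;>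
            simp [Matrix.mulVec_smul, hAy]
  refine ⟨key, ?_⟩
  rw [key]
  have hconv : Convex ℝ {m : M2B | ∃ l b c : ℝ, m = (l • y0, b • y0, c • y0, (d0 - c) • y0)} := by
    rintro x ⟨l1, b1, c1, rfl⟩ z ⟨l2, b2, c2, rfl⟩ s t hs ht hst
    refine ⟨s*l1 + t*l2, s*b1 + t*b2, s*c1 + t*c2, ?_⟩
    have h4 : d0 - (s*c1 + t*c2) = s*(d0-c1) + t*(d0-c2) := by
      linear_combination (-d0) * hst
    simp only [Prod.smul_mk, Prod.mk_add_mk, Prod.mk.injEq, smul_smul]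
    exact ⟨by rw [← add_smul], by rw [← add_smul], by rw [← add_smul],
      by rw [h4, ← add_smul]⟩
  exact hconv.isPathConnected ⟨_, 0, 0, 0, rfl⟩
end

section
/- (Case 4 via translation of Case 2) Let x₀, y₀ ∈ ℝ³ with x₀×y₀ ≠ 0. Then J⁻¹(0,0) ∩ M_{G³(x₀,y₀)} = (I,x₀)·( J⁻¹(0,0) ∩ M_{G²(y₀)} ), i.e. the corresponding level set of the optimal momentum map for Case 4 is the translate by x₀ of that of Case 2: it equals {(λy₀+x₀, βy₀+x₀, 0, 0) : λ ≠ β} ∪ {(λy₀+x₀, βy₀+x₀, γy₀, −γy₀) : γ ≠ 0}. -/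
open Matrix

noncomputable def rot (u : V3) : Matrix (Fin 3) (Fin 3) ℝ :=
  (2 / (u ⬝ᵥ u)) • Matrix.vecMulVec u u - 1

set_option maxHeartbeats 2000000 in
lemma rot_orth (u : V3) (hu : u ⬝ᵥ u ≠ 0) : (rot u)ᵀ * rot u = 1 := by
  have hs : u 0 * u 0 + u 1 * u 1 + u 2 * u 2 ≠ 0 := by
    simpa [dotProduct, Fin.sum_univ_three] using hu
  ext i j
  fin_cases i <;> fin_cases j <;>
    · simp only [rot, Matrix.mul_apply, Matrix.transpose_apply, Matrix.sub_apply,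
        Matrix.smul_apply, Matrix.vecMulVec_apply, Matrix.one_apply, smul_eq_mul,
        dotProduct, Fin.sum_univ_three, Fin.isValue]
      norm_num [Fin.ext_iff, show ((⟨2, by norm_num⟩ : Fin 3)) = 2 from rfl]
      have hs2 : u 0 ^ 2 + u 1 ^ 2 + u 2 ^ 2 ≠ 0 := by simpa [sq] using hs
      have hs3 : u 0 ^ 2 + u 2 ^ 2 + u 1 ^ 2 ≠ 0 := by rw [add_right_comm]; exact hs2
      have hs4 : u 1 ^ 2 + u 2 ^ 2 + u 0 ^ 2 ≠ 0 := by rw [add_comm, ← add_assoc]; exact hs2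
      field_simp
      ring

set_option maxHeartbeats 2000000 in
lemma rot_det (u : V3) (hu : u ⬝ᵥ u ≠ 0) : (rot u).det = 1 := by
  have hs : u 0 * u 0 + u 1 * u 1 + u 2 * u 2 ≠ 0 := by
    simpa [dotProduct, Fin.sum_univ_three] using hu
  rw [Matrix.det_fin_three]
  simp only [rot, Matrix.sub_apply, Matrix.smul_apply, Matrix.vecMulVec_apply,
    Matrix.one_apply, smul_eq_mul, dotProduct, Fin.sum_univ_three, Fin.isValue]
  norm_num [Fin.ext_iff, show ((⟨2, by norm_num⟩ : Fin 3)) = 2 from rfl]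
  have hs2 : u 0 ^ 2 + u 1 ^ 2 + u 2 ^ 2 ≠ 0 := by simpa [sq] using hs
  field_simp
  ring

lemma rot_SO3 (u : V3) (hu : u ⬝ᵥ u ≠ 0) : SO3 (rot u) :=
  ⟨rot_orth u hu, rot_det u hu⟩

lemma rot_mulVec (u v : V3) :
    rot u *ᵥ v = (2 / (u ⬝ᵥ u) * (u ⬝ᵥ v)) • u - v := by
  funext i
  fin_cases i <;>
    simp [rot, Matrix.mulVec, dotProduct, Matrix.vecMulVec_apply, Matrix.one_apply,
      Fin.sum_univ_three] <;> ring

lemma rot_fix_self (u : V3) (hu : u ⬝ᵥ u ≠ 0) : rot u *ᵥ u = u := by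
  rw [rot_mulVec]
  have : 2 / (u ⬝ᵥ u) * (u ⬝ᵥ u) = 2 := div_mul_cancel₀ 2 hu
  rw [this]
  funext i
  simp [Pi.sub_apply, Pi.smul_apply]
  ring

lemma rot_fixed (u v : V3) (hfix : rot u *ᵥ v = v) : ∃ c : ℝ, v = c • u := by
  rw [rot_mulVec] at hfix
  refine ⟨2 / (u ⬝ᵥ u) * (u ⬝ᵥ v) / 2, funext fun i => ?_⟩
  have h2 := congrFun hfix i
  simp only [Pi.sub_apply, Pi.smul_apply, smul_eq_mul] at h2 ⊢
  linear_combination (-1/2 : ℝ) * h2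

lemma rot_flip (u v : V3) (huv : u ⬝ᵥ v = 0) : rot u *ᵥ v = -v := by
  rw [rot_mulVec, huv]
  simp

lemma mainG3 (x0 y0 : V3) (h : x0 ⨯₃ y0 ≠ 0) (x : V3) :
    {m : M2B | Jmom m = (0, 0) ∧ isotropy m = G3 x y0} =
      ({m : M2B | ∃ l b : ℝ, l ≠ b ∧ m = (l • y0 + x, b • y0 + x, 0, 0)} ∪
       {m : M2B | ∃ l b c : ℝ, c ≠ 0 ∧
          m = (l • y0 + x, b • y0 + x, c • y0, -(c • y0))}) := by
  have hy0 : y0 ≠ 0 := fun hy => h (by rw [hy]; exact map_zero (crossProduct x0))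
  have hs : y0 ⬝ᵥ y0 ≠ 0 := fun hss => hy0 (dotProduct_self_eq_zero.mp hss)
  set u : V3 := x0 ⨯₃ y0 with hudef
  have hu : u ⬝ᵥ u ≠ 0 := fun huu => h (dotProduct_self_eq_zero.mp huu)
  have huy : u ⬝ᵥ y0 = 0 := by rw [dotProduct_comm]; exact dot_cross_self x0 y0
  have hBy : rot u *ᵥ y0 = -y0 := rot_flip u y0 huy
  have hByne : rot u *ᵥ y0 ≠ y0 := by
    rw [hBy]
    intro hh
    apply hy0
    funext i
    have := congrFun hh i
    simp only [Pi.neg_apply, Pi.zero_apply] at this ⊢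
    linarith
  ext m
  obtain ⟨q1, q2, p1, p2⟩ := m
  simp only [Set.mem_setOf_eq, Set.mem_union]
  constructor
  · rintro ⟨hJ, hiso⟩
    have hRmem : (rot y0, x - rot y0 *ᵥ x) ∈ isotropy (q1, q2, p1, p2) := by
      rw [hiso]; exact ⟨rot_SO3 y0 hs, rot_fix_self y0 hs, rfl⟩
    obtain ⟨-, hact⟩ := hRmem
    simp only [act, Prod.mk.injEq] at hact
    obtain ⟨h1, h2, h3, h4⟩ := hact
    have hq1 : rot y0 *ᵥ (q1 - x) = q1 - x := by
      rw [Matrix.mulVec_sub]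
      funext i
      have := congrFun h1 i
      simp only [Pi.add_apply, Pi.sub_apply] at this ⊢
      linarith
    have hq2 : rot y0 *ᵥ (q2 - x) = q2 - x := by
      rw [Matrix.mulVec_sub]
      funext i
      have := congrFun h2 i
      simp only [Pi.add_apply, Pi.sub_apply] at this ⊢
      linarith
    obtain ⟨l, hl⟩ := rot_fixed y0 (q1 - x) hq1
    obtain ⟨b, hb⟩ := rot_fixed y0 (q2 - x) hq2
    obtain ⟨c, hc⟩ := rot_fixed y0 p1 h3
    have hq1e : q1 = l • y0 + x := sub_eq_iff_eq_add.mp hl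
    have hq2e : q2 = b • y0 + x := sub_eq_iff_eq_add.mp hb
    simp only [Jmom, Prod.mk.injEq] at hJ
    obtain ⟨hJ1, hJ2⟩ := hJ
    have hp2 : p2 = -(c • y0) := by
      rw [← hc]; exact eq_neg_of_add_eq_zero_right hJ2
    by_cases hcz : c = 0
    · left
      subst hcz
      simp only [zero_smul, neg_zero] at hc hp2
      refine ⟨l, b, ?_, by rw [hq1e, hq2e, hc, hp2]⟩
      intro hlb
      subst hlb
      have hq12 : q1 = q2 := by rw [hq1e, hq2e]
      have hmem : (rot u, q1 - rot u *ᵥ q1) ∈ isotropy (q1, q2, p1, p2) := by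
        refine ⟨rot_SO3 u hu, ?_⟩
        simp only [act, Prod.mk.injEq, hc, hp2, Matrix.mulVec_zero, ← hq12]
        refine ⟨?_, ?_, trivial⟩ <;>
          · funext i
            simp only [Pi.add_apply, Pi.sub_apply]
            ring
      rw [hiso] at hmem
      exact hByne hmem.2.1
    · right
      exact ⟨l, b, c, hcz, by rw [hq1e, hq2e, hc, hp2]⟩
  · have hG3sub : ∀ l b : ℝ, ∀ P1 P2 : V3,
        (∀ A : Matrix (Fin 3) (Fin 3) ℝ, A *ᵥ y0 = y0 → A *ᵥ P1 = P1 ∧ A *ᵥ P2 = P2) →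
        G3 x y0 ⊆ isotropy (l • y0 + x, b • y0 + x, P1, P2) := by
      rintro l b P1 P2 hP ⟨A, a⟩ ⟨hA, hAy, ha⟩
      dsimp only at hA hAy ha ⊢
      refine ⟨hA, ?_⟩
      obtain ⟨hP1, hP2⟩ := hP A hAy
      subst ha
      simp only [act, Prod.mk.injEq, hP1, hP2, Matrix.mulVec_add, Matrix.mulVec_smul, hAy]
      refine ⟨?_, ?_, trivial⟩ <;>
        · funext i
          simp only [Pi.add_apply, Pi.sub_apply, Pi.smul_apply, smul_eq_mul]
          ring
    rintro (⟨l, b, hlb, hm⟩ | ⟨l, b, c, hc, hm⟩) <;>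
      simp only [Prod.mk.injEq] at hm <;>
      obtain ⟨e1, e2, e3, e4⟩ := hm <;> subst e1 <;> subst e2 <;> subst e3 <;> subst e4
    · constructor
      · simp only [Jmom, Prod.mk.injEq]
        constructor <;> simp
      · apply Set.Subset.antisymm
        · rintro ⟨A, a⟩ ⟨hA, hact⟩
          simp only [act, Prod.mk.injEq, Matrix.mulVec_add, Matrix.mulVec_smul] at hact
          obtain ⟨e1, e2, -, -⟩ := hact
          have key : (l - b) • (A *ᵥ y0) = (l - b) • y0 := by
            funext i
            have h1 := congrFun e1 i
            have h2 := congrFun e2 i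
            simp only [Pi.add_apply, Pi.smul_apply, smul_eq_mul] at h1 h2 ⊢
            linear_combination h1 - h2
          have hAy : A *ᵥ y0 = y0 :=
            smul_right_injective V3 (sub_ne_zero.mpr hlb) key
          refine ⟨hA, hAy, ?_⟩
          rw [hAy] at e1
          funext i
          have h1 := congrFun e1 i
          simp only [Pi.add_apply, Pi.sub_apply, Pi.smul_apply, smul_eq_mul] at h1 ⊢
          linarith
        · exact hG3sub l b 0 0 (fun A hAy => ⟨Matrix.mulVec_zero A, Matrix.mulVec_zero A⟩)
    · constructor
      · simp only [Jmom, Prod.mk.injEq]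
        constructor
        · funext i
          fin_cases i <;>
            simp [cross_apply, Pi.add_apply, Pi.smul_apply, Pi.neg_apply] <;> ring
        · funext i; simp
      · apply Set.Subset.antisymm
        · rintro ⟨A, a⟩ ⟨hA, hact⟩
          simp only [act, Prod.mk.injEq, Matrix.mulVec_add, Matrix.mulVec_smul] at hact
          obtain ⟨e1, -, e3, -⟩ := hact
          have hAy : A *ᵥ y0 = y0 := smul_right_injective V3 hc e3
          refine ⟨hA, hAy, ?_⟩
          rw [hAy] at e1
          funext i
          have h1 := congrFun e1 i
          simp only [Pi.add_apply, Pi.sub_apply, Pi.smul_apply, smul_eq_mul] at h1 ⊢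
          linarith
        · refine hG3sub l b (c • y0) (-(c • y0)) (fun A hAy => ⟨?_, ?_⟩)
          · rw [Matrix.mulVec_smul, hAy]
          · rw [Matrix.mulVec_neg, Matrix.mulVec_smul, hAy]


lemma G3_zero (y : V3) : G3 0 y = G2 y := by
  ext g
  simp [G3, G2, Matrix.mulVec_zero, eq_comm]

/-- Case 4 via translation of Case 2. -/
theorem stmt11 (x0 y0 : V3) (h : x0 ⨯₃ y0 ≠ 0) :
    {m : M2B | Jmom m = (0, 0) ∧ isotropy m = G3 x0 y0} =
      act 1 x0 '' {m : M2B | Jmom m = (0, 0) ∧ isotropy m = G2 y0} ∧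
    {m : M2B | Jmom m = (0, 0) ∧ isotropy m = G3 x0 y0} =
      ({m : M2B | ∃ l b : ℝ, l ≠ b ∧ m = (l • y0 + x0, b • y0 + x0, 0, 0)} ∪
       {m : M2B | ∃ l b c : ℝ, c ≠ 0 ∧
          m = (l • y0 + x0, b • y0 + x0, c • y0, -(c • y0))}) := by
  have e3 := mainG3 x0 y0 h x0
  have e2 : {m : M2B | Jmom m = (0, 0) ∧ isotropy m = G2 y0} =
      ({m : M2B | ∃ l b : ℝ, l ≠ b ∧ m = (l • y0 + 0, b • y0 + 0, 0, 0)} ∪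
       {m : M2B | ∃ l b c : ℝ, c ≠ 0 ∧
          m = (l • y0 + 0, b • y0 + 0, c • y0, -(c • y0))}) := by
    rw [← G3_zero y0]; exact mainG3 x0 y0 h 0
  refine ⟨?_, e3⟩
  rw [e3, e2]
  ext m
  simp only [Set.mem_union, Set.mem_image, Set.mem_setOf_eq]
  constructor
  · rintro (⟨l, b, hlb, rfl⟩ | ⟨l, b, c, hc, rfl⟩)
    · exact ⟨(l • y0 + 0, b • y0 + 0, 0, 0), Or.inl ⟨l, b, hlb, rfl⟩,
        by simp [act, Matrix.one_mulVec]⟩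
    · exact ⟨(l • y0 + 0, b • y0 + 0, c • y0, -(c • y0)), Or.inr ⟨l, b, c, hc, rfl⟩,
        by simp [act, Matrix.one_mulVec]⟩
  · rintro ⟨n, (⟨l, b, hlb, rfl⟩ | ⟨l, b, c, hc, rfl⟩), rfl⟩
    · exact Or.inl ⟨l, b, hlb, by simp [act, Matrix.one_mulVec]⟩
    · exact Or.inr ⟨l, b, c, hc, by simp [act, Matrix.one_mulVec]⟩
end

section
/- (Connectedness in Case 7) Let u₀ ∈ ℝ³, u₀ ≠ 0. Then the set J⁻¹(0,u₀) ∩ M_{G⁴} = {(q,p) ∈ M : J(q,p) = (0,u₀) and SE(3)_{(q,p)} = {(I,0)}} is path-connected. -/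
open Matrix

set_option maxHeartbeats 1000000

section Aux

lemma dot_self_ne_s15 {x : V3} (hx : x ≠ 0) : x ⬝ᵥ x ≠ 0 :=
  fun h => hx (dotProduct_self_eq_zero.mp h)

lemma collinear_of_cross {u x : V3} (hu : u ≠ 0) (h : u ⨯₃ x = 0) : ∃ c : ℝ, x = c • u := by
  have h2 : ¬ LinearIndependent ℝ ![u, x] := by
    rw [← crossProduct_ne_zero_iff_linearIndependent]
    simpa using h
  rw [LinearIndependent.pair_iff' hu] at h2
  push_neg at h2
  obtain ⟨a, ha⟩ := h2
  exact ⟨a, ha.symm⟩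

lemma perp_cross_ne {u w : V3} (hu : u ≠ 0) (hw : w ≠ 0) (hperp : u ⬝ᵥ w = 0) :
    u ⨯₃ w ≠ 0 := by
  intro h
  obtain ⟨c, rfl⟩ := collinear_of_cross hu h
  rw [dotProduct_smul, smul_eq_mul] at hperp
  rcases mul_eq_zero.mp hperp with h' | h'
  · exact hw (by rw [h', zero_smul])
  · exact dot_self_ne_s15 hu h'

lemma combo_ne {c d : V3} (hc : c ≠ 0) (hd : d ≠ 0) (hcd : c ⬝ᵥ d = 0) {a b : ℝ}
    (hab : a ≠ 0 ∨ b ≠ 0) : a • c + b • d ≠ 0 := by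
  intro h
  have h1 : c ⬝ᵥ (a • c + b • d) = 0 := by rw [h, dotProduct_zero]
  have h2 : d ⬝ᵥ (a • c + b • d) = 0 := by rw [h, dotProduct_zero]
  rw [dotProduct_add, dotProduct_smul, dotProduct_smul, hcd, smul_eq_mul, smul_zero, add_zero]
    at h1
  rw [dotProduct_add, dotProduct_smul, dotProduct_smul, dotProduct_comm d c, hcd, smul_zero,
    zero_add, smul_eq_mul] at h2
  have ha : a = 0 := by
    rcases mul_eq_zero.mp h1 with h' | h'
    · exact h'
    · exact absurd h' (dot_self_ne_s15 hc)
  have hb : b = 0 := by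
    rcases mul_eq_zero.mp h2 with h' | h'
    · exact h'
    · exact absurd h' (dot_self_ne_s15 hd)
  rcases hab with h' | h' <;> [exact h' ha; exact h' hb]

lemma exists_perp_s15 (u0 : V3) (hu : u0 ≠ 0) : ∃ w : V3, w ≠ 0 ∧ u0 ⬝ᵥ w = 0 := by
  by_cases h0 : u0 0 = 0 ∧ u0 1 = 0
  · refine ⟨![1, 0, 0], ?_, ?_⟩
    · intro hw
      have := congrFun hw 0
      norm_num at this
    · simp [dotProduct, Fin.sum_univ_three, h0.1]
  · refine ⟨![-u0 1, u0 0, 0], ?_, ?_⟩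
    · intro hw
      apply h0
      have h1 := congrFun hw 0
      have h2 := congrFun hw 1
      norm_num at h1 h2
      exact ⟨h2, by linarith⟩
    · simp [dotProduct, Fin.sum_univ_three]
      ring

lemma mulVec_cross (A : Matrix (Fin 3) (Fin 3) ℝ) (x y : V3) :
    (A *ᵥ x) ⨯₃ (A *ᵥ y) = (A.adjugate)ᵀ *ᵥ (x ⨯₃ y) := by
  funext i
  fin_cases i <;>
    simp [cross_apply, Matrix.mulVec, dotProduct, Fin.sum_univ_three,
      Matrix.adjugate_fin_three, Matrix.transpose_apply] <;> ring

lemma SO3.adjugate_eq {A : Matrix (Fin 3) (Fin 3) ℝ} (hA : SO3 A) : A.adjugate = Aᵀ := by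
  have h1 : A * A.adjugate = 1 := by rw [Matrix.mul_adjugate, hA.2, one_smul]
  calc A.adjugate = (Aᵀ * A) * A.adjugate := by rw [hA.1, Matrix.one_mul]
    _ = Aᵀ * (A * A.adjugate) := by rw [Matrix.mul_assoc]
    _ = Aᵀ := by rw [h1, Matrix.mul_one]

lemma SO3_fix_eq_one {A : Matrix (Fin 3) (Fin 3) ℝ} (hA : SO3 A) {x y : V3}
    (hx : A *ᵥ x = x) (hy : A *ᵥ y = y) (hxy : x ⨯₃ y ≠ 0) : A = 1 := by
  set z := x ⨯₃ y with hz
  have hzfix : A *ᵥ z = z := by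
    have := mulVec_cross A x y
    rw [hx, hy, SO3.adjugate_eq hA, Matrix.transpose_transpose] at this
    exact this.symm
  set B : Matrix (Fin 3) (Fin 3) ℝ := (Matrix.of ![x, y, z])ᵀ with hB
  have hAB : A * B = B := by
    ext i j
    have key : ∀ j : Fin 3, A *ᵥ (![x, y, z] j) = ![x, y, z] j := by
      intro j; fin_cases j <;> simpa
    have hk := congrFun (key j) i
    simp only [Matrix.mul_apply, hB, Matrix.transpose_apply, Matrix.of_apply]
    simpa [Matrix.mulVec, dotProduct, Fin.sum_univ_three] using hk
  have hdet : IsUnit B.det := by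
    have h1 : B.det = Matrix.det ![x, y, z] := by rw [hB, Matrix.det_transpose]; rfl
    have h2 : Matrix.det ![x, y, z] = z ⬝ᵥ (x ⨯₃ y) := by
      rw [← triple_product_eq_det, triple_product_permutation, triple_product_permutation]
    have h3 : B.det ≠ 0 := by
      rw [h1, h2, ← hz]
      exact fun h => hxy (dotProduct_self_eq_zero.mp h)
    exact isUnit_iff_ne_zero.mpr h3
  calc A = A * (B * B⁻¹) := by rw [Matrix.mul_nonsing_inv B hdet, Matrix.mul_one]
    _ = (A * B) * B⁻¹ := by rw [Matrix.mul_assoc]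
    _ = B * B⁻¹ := by rw [hAB]
    _ = 1 := Matrix.mul_nonsing_inv B hdet

lemma rot_aux (a b c : ℝ) (hd : a * a + b * b + c * c ≠ 0) :
    ∃ A : Matrix (Fin 3) (Fin 3) ℝ, SO3 A ∧ A ≠ 1 ∧ A *ᵥ ![a, b, c] = ![a, b, c] := by
  set d : ℝ := a * a + b * b + c * c with hddef
  refine ⟨!![2*a*a/d - 1, 2*a*b/d, 2*a*c/d;
             2*b*a/d, 2*b*b/d - 1, 2*b*c/d;
             2*c*a/d, 2*c*b/d, 2*c*c/d - 1], ⟨?_, ?_⟩, ?_, ?_⟩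
  · have hsym : (!![2*a*a/d - 1, 2*a*b/d, 2*a*c/d;
             2*b*a/d, 2*b*b/d - 1, 2*b*c/d;
             2*c*a/d, 2*c*b/d, 2*c*c/d - 1] : Matrix (Fin 3) (Fin 3) ℝ)ᵀ
           = !![2*a*a/d - 1, 2*a*b/d, 2*a*c/d;
             2*b*a/d, 2*b*b/d - 1, 2*b*c/d;
             2*c*a/d, 2*c*b/d, 2*c*c/d - 1] := by
      ext i j
      fin_cases i <;> fin_cases j <;> simp [Matrix.transpose_apply] <;> ring
    rw [hsym, Matrix.mul_fin_three, Matrix.one_fin_three]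
    ext i j
    fin_cases i <;> fin_cases j <;>
      simp [Matrix.vecHead, Matrix.vecTail] <;> field_simp <;> ring
  · rw [Matrix.det_fin_three]
    simp only [Matrix.cons_val', Matrix.cons_val_zero, Matrix.cons_val_one, Matrix.head_cons,
      Matrix.empty_val', Matrix.cons_val_fin_one, Matrix.head_fin_const, Matrix.cons_val_two,
      Matrix.tail_cons, Matrix.of_apply]
    field_simp
    ring
  · intro h
    have e0 := congrFun (congrFun h 0) 0
    have e1 := congrFun (congrFun h 1) 1
    have e2 := congrFun (congrFun h 2) 2
    simp [Matrix.one_apply] at e0 e1 e2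
    field_simp at e0 e1 e2
    exact hd (by linarith [e0, e1, e2, hddef])
  · funext i
    fin_cases i <;>
      simp [Matrix.mulVec, dotProduct, Fin.sum_univ_three] <;> field_simp <;> ring

lemma exists_rot (u0 : V3) (hu : u0 ≠ 0) :
    ∃ A : Matrix (Fin 3) (Fin 3) ℝ, SO3 A ∧ A ≠ 1 ∧ A *ᵥ u0 = u0 := by
  have hd : u0 0 * u0 0 + u0 1 * u0 1 + u0 2 * u0 2 ≠ 0 := by
    intro h
    apply hu
    have k0 : u0 0 = 0 := by
      nlinarith [mul_self_nonneg (u0 0), mul_self_nonneg (u0 1), mul_self_nonneg (u0 2)]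
    have k1 : u0 1 = 0 := by
      nlinarith [mul_self_nonneg (u0 0), mul_self_nonneg (u0 1), mul_self_nonneg (u0 2)]
    have k2 : u0 2 = 0 := by
      nlinarith [mul_self_nonneg (u0 0), mul_self_nonneg (u0 1), mul_self_nonneg (u0 2)]
    funext i
    fin_cases i <;> simp [k0, k1, k2]
  have hvec : u0 = ![u0 0, u0 1, u0 2] := by
    funext i; fin_cases i <;> rfl
  obtain ⟨A, hA, hA1, hAv⟩ := rot_aux (u0 0) (u0 1) (u0 2) hd
  exact ⟨A, hA, hA1, by rw [hvec]; exact hAv⟩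

lemma mem_key (u0 : V3) (hu : u0 ≠ 0) (q1 q2 p1 : V3)
    (hC : q1 ⨯₃ p1 + q2 ⨯₃ (u0 - p1) = 0)
    (hP : u0 ⨯₃ p1 ≠ 0 ∨ u0 ⨯₃ (q1 - q2) ≠ 0) :
    (q1, q2, p1, u0 - p1) ∈ {m : M2B | Jmom m = (0, u0) ∧ isotropy m = G4} := by
  constructor
  · refine Prod.ext ?_ ?_
    · exact hC
    · show p1 + (u0 - p1) = u0
      abel
  · apply Set.eq_of_subset_of_subset
    · rintro ⟨A, a⟩ ⟨hSO, hact⟩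
      simp only [act, Prod.mk.injEq] at hact
      obtain ⟨h1, h2, h3, h4⟩ := hact
      have hu0fix : A *ᵥ u0 = u0 := by
        have : A *ᵥ (p1 + (u0 - p1)) = p1 + (u0 - p1) := by
          rw [Matrix.mulVec_add, h3, h4]
        simpa [add_sub_cancel] using this
      have hQfix : A *ᵥ (q1 - q2) = q1 - q2 := by
        rw [Matrix.mulVec_sub]
        have := congrArg₂ (fun x y => x - y) h1 h2
        simpa using this
      have hA1 : A = 1 := by
        rcases hP with hp | hq
        · exact SO3_fix_eq_one hSO hu0fix h3 hp
        · exact SO3_fix_eq_one hSO hu0fix hQfix hq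
      have ha0 : a = 0 := by
        rw [hA1, Matrix.one_mulVec] at h1
        have := congrArg (fun v => v - q1) h1
        simpa using this
      simp [G4, hA1, ha0]
    · rintro g hg
      rw [G4, Set.mem_singleton_iff] at hg
      subst hg
      refine ⟨⟨by simp, by simp⟩, ?_⟩
      simp [act]

lemma mem_P (u0 : V3) (hu : u0 ≠ 0) {m : M2B}
    (hm : m ∈ {m : M2B | Jmom m = (0, u0) ∧ isotropy m = G4}) :
    u0 ⨯₃ m.2.2.1 ≠ 0 ∨ u0 ⨯₃ (m.1 - m.2.1) ≠ 0 := by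
  by_contra hcon
  push_neg at hcon
  obtain ⟨hcp, hcq⟩ := hcon
  obtain ⟨α, hα⟩ := collinear_of_cross hu hcp
  obtain ⟨γ, hγ⟩ := collinear_of_cross hu hcq
  obtain ⟨A, hSO, hA1, hAu⟩ := exists_rot u0 hu
  have hsum : m.2.2.1 + m.2.2.2 = u0 := congrArg Prod.snd hm.1
  have hp2 : m.2.2.2 = u0 - m.2.2.1 := by rw [← hsum]; abel
  have hmem : (A, m.1 - A *ᵥ m.1) ∈ isotropy m := by
    refine ⟨hSO, ?_⟩
    have hq1 : m.1 = γ • u0 + m.2.1 := by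
      have := congrArg (fun v => v + m.2.1) hγ
      simpa [sub_add_cancel] using this
    have hAq : A *ᵥ m.1 = γ • u0 + A *ᵥ m.2.1 := by
      rw [hq1, Matrix.mulVec_add, Matrix.mulVec_smul, hAu]
    have hp1fix : A *ᵥ m.2.2.1 = m.2.2.1 := by
      rw [hα, Matrix.mulVec_smul, hAu]
    have hp2fix : A *ᵥ m.2.2.2 = m.2.2.2 := by
      rw [hp2, Matrix.mulVec_sub, hAu, hp1fix]
    have c1 : A *ᵥ m.1 + (m.1 - A *ᵥ m.1) = m.1 := by abel
    have c2 : A *ᵥ m.2.1 + (m.1 - A *ᵥ m.1) = m.2.1 := by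
      rw [hAq, hq1]; abel
    show (A *ᵥ m.1 + (m.1 - A *ᵥ m.1), A *ᵥ m.2.1 + (m.1 - A *ᵥ m.1),
      A *ᵥ m.2.2.1, A *ᵥ m.2.2.2) = m
    rw [c1, c2, hp1fix, hp2fix]
  rw [hm.2] at hmem
  rw [G4, Set.mem_singleton_iff, Prod.mk.injEq] at hmem
  exact hA1 hmem.1

lemma segJoin {X : Type*} [TopologicalSpace X] {S : Set X} (f : ℝ → X) (hf : Continuous f)
    (h : ∀ t : ℝ, t ∈ Set.Icc (0:ℝ) 1 → f t ∈ S) {a b : X} (ha : f 0 = a) (hb : f 1 = b) :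
    JoinedIn S a b := by
  subst ha hb
  exact ⟨⟨⟨fun t => f t, hf.comp continuous_subtype_val⟩, rfl, rfl⟩, fun t => h t t.2⟩

lemma crossR (u : V3) (s t : ℝ) (a b : V3) :
    u ⨯₃ (s • a + t • b) = s • (u ⨯₃ a) + t • (u ⨯₃ b) := by
  funext i
  fin_cases i <;> simp [cross_apply] <;> ring

lemma coeff_ne {t : ℝ} : (1 - t : ℝ) ≠ 0 ∨ t ≠ 0 := by
  rcases eq_or_ne t 0 with h | h
  · left; rw [h]; norm_num
  · right; exact h

lemma joined_U_perp (u0 : V3) (hu : u0 ≠ 0) {c d : V3} (hc : c ≠ 0) (hd : d ≠ 0)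
    (hcd : c ⬝ᵥ d = 0) (hcu : u0 ⬝ᵥ c = 0) (hdu : u0 ⬝ᵥ d = 0) :
    JoinedIn {v : V3 | u0 ⨯₃ v ≠ 0} c d := by
  apply segJoin (f := fun t : ℝ => (1 - t) • c + t • d)
  · fun_prop
  · intro t _
    have hne : (1 - t) • c + t • d ≠ 0 := combo_ne hc hd hcd coeff_ne
    have hperp : u0 ⬝ᵥ ((1 - t) • c + t • d) = 0 := by
      rw [dotProduct_add, dotProduct_smul, dotProduct_smul, hcu, hdu]
      simp
    exact perp_cross_ne hu hne hperp
  · simp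
  · simp

lemma joined_U_plane (u0 : V3) (hu : u0 ≠ 0) {c c' : V3} (hc : c ≠ 0) (hc' : c' ≠ 0)
    (hcu : u0 ⬝ᵥ c = 0) (hcu' : u0 ⬝ᵥ c' = 0) :
    JoinedIn {v : V3 | u0 ⨯₃ v ≠ 0} c c' := by
  by_cases hcc : c ⨯₃ c' = 0
  · have hd : u0 ⨯₃ c ≠ 0 := perp_cross_ne hu hc hcu
    have hcd : c ⬝ᵥ (u0 ⨯₃ c) = 0 := dot_cross_self u0 c
    have hdu : u0 ⬝ᵥ (u0 ⨯₃ c) = 0 := dot_self_cross u0 c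
    obtain ⟨e, he⟩ := collinear_of_cross hc hcc
    have hdc' : (u0 ⨯₃ c) ⬝ᵥ c' = 0 := by
      rw [he, dotProduct_smul, dotProduct_comm, hcd, smul_zero]
    exact (joined_U_perp u0 hu hc hd hcd hcu hdu).trans
      (joined_U_perp u0 hu hd hc' (by rwa [dotProduct_comm] at hdc' ⊢) hdu hcu')
  · apply segJoin (f := fun t : ℝ => (1 - t) • c + t • c')
    · fun_prop
    · intro t _
      have hne : (1 - t) • c + t • c' ≠ 0 := by
        intro h
        have h2 : c ⨯₃ ((1 - t) • c + t • c') = 0 := by rw [h]; simp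
        rw [crossR, cross_self, smul_zero, zero_add] at h2
        rcases smul_eq_zero.mp h2 with h' | h'
        · subst h'
          simp at h
          exact hc h
        · exact hcc h'
      have hperp : u0 ⬝ᵥ ((1 - t) • c + t • c') = 0 := by
        rw [dotProduct_add, dotProduct_smul, dotProduct_smul, hcu, hcu']
        simp
      exact perp_cross_ne hu hne hperp
    · simp
    · simp

lemma joined_U (u0 : V3) (hu : u0 ≠ 0) {x y : V3} (hx : u0 ⨯₃ x ≠ 0) (hy : u0 ⨯₃ y ≠ 0) :
    JoinedIn {v : V3 | u0 ⨯₃ v ≠ 0} x y := by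
  have step : ∀ z : V3, u0 ⨯₃ z ≠ 0 → JoinedIn {v : V3 | u0 ⨯₃ v ≠ 0} z (u0 ⨯₃ z) := by
    intro z hz
    apply segJoin (f := fun t : ℝ => (1 - t) • z + t • (u0 ⨯₃ z))
    · fun_prop
    · intro t _
      show u0 ⨯₃ ((1 - t) • z + t • (u0 ⨯₃ z)) ≠ 0
      rw [crossR]
      exact combo_ne hz (perp_cross_ne hu hz (dot_self_cross u0 z))
        (dot_cross_self u0 (u0 ⨯₃ z)) coeff_ne
    · simp
    · simp
  have mid : JoinedIn {v : V3 | u0 ⨯₃ v ≠ 0} (u0 ⨯₃ x) (u0 ⨯₃ y) :=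
    joined_U_plane u0 hu hx hy (dot_self_cross u0 x) (dot_self_cross u0 y)
  exact ((step x hx).trans mid).trans (step y hy).symm

end Aux

/-- Connectedness in Case 7: J⁻¹(0,u₀) ∩ M_{G⁴} is path-connected. -/
theorem stmt15 (u0 : V3) (hu : u0 ≠ 0) :
    IsPathConnected {m : M2B | Jmom m = (0, u0) ∧ isotropy m = G4} := by
  obtain ⟨w, hw0, hwperp⟩ := exists_perp_s15 u0 hu
  have hw : u0 ⨯₃ w ≠ 0 := perp_cross_ne hu hw0 hwperp
  have hzeroC : ∀ v v' : V3, (0 : V3) ⨯₃ v + (0 : V3) ⨯₃ v' = 0 := by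
    intro v v'
    funext i
    fin_cases i <;> simp [cross_apply]
  have hm0 : ((0:V3), (0:V3), w, u0 - w) ∈
      {m : M2B | Jmom m = (0, u0) ∧ isotropy m = G4} :=
    mem_key u0 hu 0 0 w (hzeroC w (u0 - w)) (Or.inl hw)
  refine ⟨_, hm0, ?_⟩
  rintro ⟨q1, q2, p1, p2⟩ hm
  have hJ2 : p1 + p2 = u0 := congrArg Prod.snd hm.1
  have hp2 : p2 = u0 - p1 := by rw [← hJ2]; abel
  subst hp2
  have hJ1 : q1 ⨯₃ p1 + q2 ⨯₃ (u0 - p1) = 0 := congrArg Prod.fst hm.1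
  have hP : u0 ⨯₃ p1 ≠ 0 ∨ u0 ⨯₃ (q1 - q2) ≠ 0 := mem_P u0 hu hm
  apply JoinedIn.symm
  rcases hP with hp | hq
  · -- Case 1 : p¹ not parallel to u₀
    have seg1 : JoinedIn {m : M2B | Jmom m = (0, u0) ∧ isotropy m = G4}
        (q1, q2, p1, u0 - p1) ((0:V3), (0:V3), p1, u0 - p1) := by
      apply segJoin (f := fun t : ℝ => ((1-t) • q1, (1-t) • q2, p1, u0 - p1))
      · fun_prop
      · intro t _
        apply mem_key u0 hu _ _ _ ?_ (Or.inl hp)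
        funext i
        have h := congrFun hJ1 i
        fin_cases i <;>
          (simp [cross_apply] at h ⊢; linear_combination (1-t) * h)
      · simp
      · simp
    have seg2 : JoinedIn {m : M2B | Jmom m = (0, u0) ∧ isotropy m = G4}
        ((0:V3), (0:V3), p1, u0 - p1) ((0:V3), (0:V3), w, u0 - w) := by
      obtain ⟨γ, hγ⟩ := joined_U u0 hu hp hw
      have hg : Continuous (fun v : V3 => (((0:V3), (0:V3), v, u0 - v) : M2B)) := by fun_prop
      exact ⟨γ.map hg, fun t => mem_key u0 hu 0 0 (γ t) (hzeroC (γ t) (u0 - γ t))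
        (Or.inl (hγ t))⟩
    exact seg1.trans seg2
  · -- Case 2 : q¹ − q² not parallel to u₀
    have seg1 : JoinedIn {m : M2B | Jmom m = (0, u0) ∧ isotropy m = G4}
        (q1, q2, p1, u0 - p1) ((q1 - q2), (0:V3), (0:V3), u0) := by
      apply segJoin
        (f := fun t : ℝ => ((q1 - q2) + (1-t) • q2, (1-t) • q2, (1-t) • p1, u0 - (1-t) • p1))
      · fun_prop
      · intro t _
        apply mem_key u0 hu _ _ _ ?_ (Or.inr (by simpa using hq))
        funext i
        have h := congrFun hJ1 i
        fin_cases i <;>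
          (simp [cross_apply] at h ⊢; linear_combination (1-t) * h)
      · simp
      · norm_num
    have seg2 : JoinedIn {m : M2B | Jmom m = (0, u0) ∧ isotropy m = G4}
        ((q1 - q2), (0:V3), (0:V3), u0) (w, (0:V3), (0:V3), u0) := by
      obtain ⟨γ, hγ⟩ := joined_U u0 hu hq hw
      have hg : Continuous (fun v : V3 => ((v, (0:V3), (0:V3), u0) : M2B)) := by fun_prop
      refine ⟨γ.map hg, fun t => ?_⟩
      have := mem_key u0 hu (γ t) 0 0 ?_ (Or.inr (by simpa using hγ t))
      · simpa using this
      · funext i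
        fin_cases i <;> simp [cross_apply]
    have seg3 : JoinedIn {m : M2B | Jmom m = (0, u0) ∧ isotropy m = G4}
        (w, (0:V3), (0:V3), u0) (w, (0:V3), w, u0 - w) := by
      apply segJoin (f := fun t : ℝ => (w, (0:V3), t • w, u0 - t • w))
      · fun_prop
      · intro t _
        apply mem_key u0 hu _ _ _ ?_ (Or.inr (by simpa using hw))
        funext i
        fin_cases i <;> simp [cross_apply] <;> ring
      · simp
      · simp
    have seg4 : JoinedIn {m : M2B | Jmom m = (0, u0) ∧ isotropy m = G4}
        (w, (0:V3), w, u0 - w) ((0:V3), (0:V3), w, u0 - w) := by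
      apply segJoin (f := fun t : ℝ => ((1-t) • w, (0:V3), w, u0 - w))
      · fun_prop
      · intro t _
        apply mem_key u0 hu _ _ _ ?_ (Or.inl hw)
        funext i
        fin_cases i <;> simp [cross_apply] <;> ring
      · simp
      · simp
    exact ((seg1.trans seg2).trans seg3).trans seg4
end
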